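/- arXiv:1608.06314 — 8 statements merged into one kernel-verified Lean document; each statement's English description precedes it below -/
import Mathlib

section
/- Suppose there is no δ > 0 such that both P and Q are δ-lattice distributions. If α > 0 is a real number with ψ(α) = 0 and τ is a real number with ψ(α + iτ) = 0, then τ = 0. In other words, α is the only zero of ψ on the vertical line Re(s) = α. -/
open MeasureTheory Set Filter

/-- A probability measure on `(0,∞)` is a `δ`-lattice distribution if it is supported
on the set `{kδ : k = 1, 2, 3, ...}`. -/
def IsLatticeDist (P : Measure ℝ) (δ : ℝ) : Prop :=
  ∀ᵐ t ∂P, ∃ k : ℕ, 0 < k ∧ t = (k : ℝ) * δ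

section Aux

variable {μ : Measure ℝ} [IsProbabilityMeasure μ]

lemma aux_ae_pos (hμ : μ (Set.Iic 0) = 0) : ∀ᵐ t ∂μ, 0 < t := by
  rw [ae_iff]
  simpa [Set.Iic, not_lt] using hμ

lemma aux_integrable (hae : ∀ᵐ t ∂μ, 0 < t) (s : ℂ) (hs : 0 ≤ s.re) :
    Integrable (fun t : ℝ => Complex.exp (-s * (t : ℂ))) μ := by
  refine Integrable.mono' (integrable_const 1) ?_ ?_
  · exact (Complex.continuous_exp.comp (by continuity)).aestronglyMeasurable
  · filter_upwards [hae] with t ht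
    rw [Complex.norm_exp]
    have hre : (-s * (t : ℂ)).re = -(s.re * t) := by
      simp [Complex.mul_re]
    rw [hre]
    have : -(s.re * t) ≤ 0 := by nlinarith
    simpa using Real.exp_le_exp.2 this

lemma aux_re_integral_real (α : ℝ) :
    (∫ t, Complex.exp (-(α : ℂ) * (t : ℂ)) ∂μ).re
      = ∫ t, Real.exp (-(α * t)) ∂μ := by
  rw [show (fun t : ℝ => Complex.exp (-(α : ℂ) * (t : ℂ)))
      = fun t : ℝ => ((Real.exp (-(α * t)) : ℝ) : ℂ) by
    funext t
    rw [show -(α : ℂ) * (t : ℂ) = ((-(α * t) : ℝ) : ℂ) by push_cast; ring,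
      Complex.ofReal_exp]]
  have h : ∫ t, ((Real.exp (-(α * t)) : ℝ) : ℂ) ∂μ
      = ((∫ t, Real.exp (-(α * t)) ∂μ : ℝ) : ℂ) := integral_ofReal
  rw [h, Complex.ofReal_re]

lemma aux_re_integral_cos (α τ : ℝ)
    (hint : Integrable (fun t : ℝ =>
      Complex.exp (-((α : ℂ) + (τ : ℂ) * Complex.I) * (t : ℂ))) μ) :
    (∫ t, Complex.exp (-((α : ℂ) + (τ : ℂ) * Complex.I) * (t : ℂ)) ∂μ).re
      = ∫ t, Real.exp (-(α * t)) * Real.cos (τ * t) ∂μ := by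
  have := Complex.reCLM.integral_comp_comm hint
  rw [show Complex.reCLM (∫ t, Complex.exp (-((α : ℂ) + (τ : ℂ) * Complex.I) * (t : ℂ)) ∂μ)
      = (∫ t, Complex.exp (-((α : ℂ) + (τ : ℂ) * Complex.I) * (t : ℂ)) ∂μ).re from rfl] at this
  rw [← this]
  congr 1
  funext t
  rw [show Complex.reCLM (Complex.exp (-((α : ℂ) + (τ : ℂ) * Complex.I) * (t : ℂ)))
      = (Complex.exp (-((α : ℂ) + (τ : ℂ) * Complex.I) * (t : ℂ))).re from rfl]
  rw [Complex.exp_re]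
  have h1 : (-((α : ℂ) + (τ : ℂ) * Complex.I) * (t : ℂ)).re = -(α * t) := by
    simp [Complex.mul_re, Complex.add_re, Complex.add_im]
  have h2 : (-((α : ℂ) + (τ : ℂ) * Complex.I) * (t : ℂ)).im = -(τ * t) := by
    simp [Complex.mul_im, Complex.add_re, Complex.add_im]
  rw [h1, h2, Real.cos_neg]

lemma aux_int_f (hae : ∀ᵐ t ∂μ, 0 < t) (α : ℝ) (hα : 0 < α) :
    Integrable (fun t : ℝ => Real.exp (-(α * t))) μ := by
  refine Integrable.mono' (integrable_const 1) ?_ ?_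
  · exact (Continuous.aestronglyMeasurable (by continuity))
  · filter_upwards [hae] with t ht
    rw [Real.norm_eq_abs, abs_of_pos (Real.exp_pos _), Real.exp_le_one_iff]
    nlinarith

lemma aux_int_g (hae : ∀ᵐ t ∂μ, 0 < t) (α τ : ℝ) (hα : 0 < α) :
    Integrable (fun t : ℝ => Real.exp (-(α * t)) * Real.cos (τ * t)) μ := by
  refine Integrable.mono' (integrable_const 1) ?_ ?_
  · exact (Continuous.aestronglyMeasurable (by continuity))
  · filter_upwards [hae] with t ht
    have h1 : Real.exp (-(α * t)) ≤ 1 := by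
      rw [Real.exp_le_one_iff]; nlinarith
    have h2 : |Real.cos (τ * t)| ≤ 1 := Real.abs_cos_le_one _
    rw [Real.norm_eq_abs, abs_mul, abs_of_pos (Real.exp_pos _)]
    calc Real.exp (-(α * t)) * |Real.cos (τ * t)| ≤ 1 * 1 := by
          apply mul_le_mul h1 h2 (abs_nonneg _) zero_le_one
      _ = 1 := one_mul 1

lemma aux_lattice (hμ0 : μ (Set.Iic 0) = 0) (α τ : ℝ) (hα : 0 < α) (hτ : τ ≠ 0)
    (hzero : ∫ t, (Real.exp (-(α * t)) - Real.exp (-(α * t)) * Real.cos (τ * t)) ∂μ = 0) :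
    IsLatticeDist μ (2 * Real.pi / |τ|) := by
  have hae := aux_ae_pos hμ0
  have hnonneg : 0 ≤ fun t : ℝ =>
      Real.exp (-(α * t)) - Real.exp (-(α * t)) * Real.cos (τ * t) := by
    intro t
    have h1 : Real.cos (τ * t) ≤ 1 := Real.cos_le_one _
    have h2 : 0 < Real.exp (-(α * t)) := Real.exp_pos _
    simp only [Pi.zero_apply]
    nlinarith
  have hint : Integrable (fun t : ℝ =>
      Real.exp (-(α * t)) - Real.exp (-(α * t)) * Real.cos (τ * t)) μ := by
    refine Integrable.mono' (integrable_const 2) ?_ ?_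
    · exact (Continuous.aestronglyMeasurable (by continuity))
    · filter_upwards [hae] with t ht
      have h1 : Real.exp (-(α * t)) ≤ 1 := by
        rw [Real.exp_le_one_iff]
        nlinarith
      have h2 := abs_le.1 (Real.abs_cos_le_one (τ * t))
      show |Real.exp (-(α * t)) - Real.exp (-(α * t)) * Real.cos (τ * t)| ≤ 2
      have h3 := Real.exp_pos (-(α * t))
      have h5 : (0:ℝ) ≤ Real.exp (-(α * t)) - Real.exp (-(α * t)) * Real.cos (τ * t) :=
        hnonneg t
      rw [abs_of_nonneg h5]
      have h4 : Real.exp (-(α * t)) * (1 - Real.cos (τ * t)) ≤ 1 * (1 - Real.cos (τ * t)) :=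
        mul_le_mul_of_nonneg_right h1 (by linarith)
      nlinarith
  have hae0 := (integral_eq_zero_iff_of_nonneg hnonneg hint).1 hzero
  filter_upwards [hae, hae0] with t ht h0
  have hexp := Real.exp_pos (-(α * t))
  have hcos : Real.cos (τ * t) = 1 := by
    have : Real.exp (-(α * t)) * (1 - Real.cos (τ * t)) = 0 := by
      have := h0
      simp only [Pi.zero_apply] at this
      nlinarith
    have h1 : 1 - Real.cos (τ * t) = 0 := by
      rcases mul_eq_zero.1 this with h | h
      · exact absurd h (ne_of_gt hexp)
      · exact h
    linarith
  obtain ⟨n, hn⟩ := (Real.cos_eq_one_iff _).1 hcos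
  -- τ * t = n * (2π)
  have hτt : |τ| * t = |n| * (2 * Real.pi) := by
    have habs : |τ * t| = |(n : ℝ) * (2 * Real.pi)| := by rw [hn]
    rw [abs_mul, abs_mul, abs_of_pos ht,
      abs_of_pos (by positivity : (0 : ℝ) < 2 * Real.pi)] at habs
    rw [habs, Int.cast_abs]
  have hτabs : 0 < |τ| := abs_pos.2 hτ
  refine ⟨n.natAbs, ?_, ?_⟩
  · by_contra h
    have : n.natAbs = 0 := Nat.eq_zero_of_not_pos h
    have hn0 : n = 0 := Int.natAbs_eq_zero.1 this
    rw [hn0] at hτt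
    simp at hτt
    rcases hτt with h | h
    · exact hτ h
    · linarith
  · have : t = |(n : ℝ)| * (2 * Real.pi) / |τ| := by
      field_simp at hτt ⊢
      rw [Int.cast_abs] at hτt
      linarith [hτt]
    rw [this]
    push_cast [Nat.cast_natAbs]
    ring

end Aux

/-- Suppose there is no `δ > 0` such that both `P` and `Q` are `δ`-lattice
distributions. If `α > 0` is a real number with `ψ(α) = 0` and `τ` is a real number with
`ψ(α + iτ) = 0`, then `τ = 0`; i.e. `α` is the only zero of `ψ` on the line `Re s = α`. -/
theorem stmt1
    (P Q : Measure ℝ) [IsProbabilityMeasure P] [IsProbabilityMeasure Q]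
    (hP : P (Set.Iic 0) = 0) (hQ : Q (Set.Iic 0) = 0)
    (ψ : ℂ → ℂ)
    (hψ : ∀ s : ℂ, ψ s =
      1 - (∫ t, Complex.exp (-s * (t : ℂ)) ∂P) - (∫ t, Complex.exp (-s * (t : ℂ)) ∂Q))
    (hlat : ¬ ∃ δ : ℝ, 0 < δ ∧ IsLatticeDist P δ ∧ IsLatticeDist Q δ)
    (α : ℝ) (hα : 0 < α) (hroot : ψ (α : ℂ) = 0)
    (τ : ℝ) (hroot' : ψ ((α : ℂ) + (τ : ℂ) * Complex.I) = 0) :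
    τ = 0 := by
  by_contra hτ
  have haeP := aux_ae_pos hP
  have haeQ := aux_ae_pos hQ
  have hres : (0:ℝ) ≤ ((α : ℂ)).re := by simp [hα.le]
  have hres' : (0:ℝ) ≤ ((α : ℂ) + (τ : ℂ) * Complex.I).re := by
    simp [Complex.add_re, Complex.mul_re, hα.le]
  have hintP2 := aux_integrable haeP ((α : ℂ) + (τ : ℂ) * Complex.I) hres'
  have hintQ2 := aux_integrable haeQ ((α : ℂ) + (τ : ℂ) * Complex.I) hres'
  -- equation from the real root
  rw [hψ] at hroot hroot'
  have h1 : (∫ t, Real.exp (-(α * t)) ∂P) + (∫ t, Real.exp (-(α * t)) ∂Q) = 1 := by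
    have h := congrArg Complex.re hroot
    rw [Complex.zero_re, Complex.sub_re, Complex.sub_re, Complex.one_re,
      aux_re_integral_real α, aux_re_integral_real α] at h
    linarith
  have h2 : (∫ t, Real.exp (-(α * t)) * Real.cos (τ * t) ∂P)
      + (∫ t, Real.exp (-(α * t)) * Real.cos (τ * t) ∂Q) = 1 := by
    have h := congrArg Complex.re hroot'
    rw [Complex.zero_re, Complex.sub_re, Complex.sub_re, Complex.one_re,
      aux_re_integral_cos α τ hintP2, aux_re_integral_cos α τ hintQ2] at h
    linarith
  have hsubP : ∫ t, (Real.exp (-(α * t)) - Real.exp (-(α * t)) * Real.cos (τ * t)) ∂P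
      = (∫ t, Real.exp (-(α * t)) ∂P) - ∫ t, Real.exp (-(α * t)) * Real.cos (τ * t) ∂P :=
    integral_sub (aux_int_f haeP α hα) (aux_int_g haeP α τ hα)
  have hsubQ : ∫ t, (Real.exp (-(α * t)) - Real.exp (-(α * t)) * Real.cos (τ * t)) ∂Q
      = (∫ t, Real.exp (-(α * t)) ∂Q) - ∫ t, Real.exp (-(α * t)) * Real.cos (τ * t) ∂Q :=
    integral_sub (aux_int_f haeQ α hα) (aux_int_g haeQ α τ hα)
  have hnnP : 0 ≤ ∫ t, (Real.exp (-(α * t)) - Real.exp (-(α * t)) * Real.cos (τ * t)) ∂P := by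
    apply integral_nonneg
    intro t
    show (0:ℝ) ≤ Real.exp (-(α * t)) - Real.exp (-(α * t)) * Real.cos (τ * t)
    nlinarith [Real.cos_le_one (τ * t), Real.exp_pos (-(α * t))]
  have hnnQ : 0 ≤ ∫ t, (Real.exp (-(α * t)) - Real.exp (-(α * t)) * Real.cos (τ * t)) ∂Q := by
    apply integral_nonneg
    intro t
    show (0:ℝ) ≤ Real.exp (-(α * t)) - Real.exp (-(α * t)) * Real.cos (τ * t)
    nlinarith [Real.cos_le_one (τ * t), Real.exp_pos (-(α * t))]
  have hzP : ∫ t, (Real.exp (-(α * t)) - Real.exp (-(α * t)) * Real.cos (τ * t)) ∂P = 0 := by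
    rw [hsubP] at hnnP ⊢
    rw [hsubQ] at hnnQ
    linarith
  have hzQ : ∫ t, (Real.exp (-(α * t)) - Real.exp (-(α * t)) * Real.cos (τ * t)) ∂Q = 0 := by
    rw [hsubQ] at hnnQ ⊢
    rw [hsubP] at hnnP
    linarith
  exact hlat ⟨2 * Real.pi / |τ|, by positivity,
    aux_lattice hP α τ hα hτ hzP, aux_lattice hQ α τ hα hτ hzQ⟩
end

section
/- Let α > 0 be the real root of ψ and set ψ'(α) = ∫₀^∞ t e^{-αt} d(P+Q)(t). Then each of the three functions m_f*(s) = (1-p*(s))(1-q*(s))/(s·ψ(s)), m_g*(s) = (1-p*(s))q*(s)/(s·ψ(s)), and n_f*(s) = (1-q*(s))p*(s)/(s·ψ(s)) has a simple pole at s = α: as s → α (s complex with Re(s) > 0, s ≠ α), (s-α)·m_f*(s) → p*(α)q*(α)/(α·ψ'(α)), (s-α)·m_g*(s) → q*(α)²/(α·ψ'(α)), and (s-α)·n_f*(s) → p*(α)²/(α·ψ'(α)). -/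
open MeasureTheory Set Filter Metric
open scoped Topology ENNReal

lemma ae_pos' {μ : Measure ℝ} (hμ : μ (Set.Iic 0) = 0) : ∀ᵐ t ∂μ, 0 < t := by
  rw [ae_iff]
  convert hμ using 2
  ext t; simp [not_lt]

lemma exp_decay_bound {β t : ℝ} (hβ : 0 < β) (ht : 0 ≤ t) :
    t * Real.exp (-β * t) ≤ 1 / β := by
  have h1 : β * t ≤ Real.exp (β * t) := le_trans (by linarith) (Real.add_one_le_exp _)
  have h2 : β * t * Real.exp (-(β * t)) ≤ Real.exp (β * t) * Real.exp (-(β * t)) :=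
    mul_le_mul_of_nonneg_right h1 (Real.exp_nonneg _)
  rw [← Real.exp_add, add_neg_cancel, Real.exp_zero] at h2
  rw [le_div_iff₀ hβ]
  calc t * Real.exp (-β * t) * β = β * t * Real.exp (-(β * t)) := by ring_nf
    _ ≤ 1 := h2

lemma lap_main (μ : Measure ℝ) [IsProbabilityMeasure μ] (hμ : μ (Set.Iic 0) = 0)
    {α : ℝ} (hα : 0 < α) :
    Integrable (fun t => t * Real.exp (-α * t)) μ ∧
    0 < ∫ t, t * Real.exp (-α * t) ∂μ ∧
    HasDerivAt (fun s : ℂ => ∫ t, Complex.exp (-s * (t : ℂ)) ∂μ)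
      (-((∫ t, t * Real.exp (-α * t) ∂μ : ℝ) : ℂ)) (α : ℂ) := by
  have hae := ae_pos' hμ
  have hcontf : Continuous (fun t : ℝ => t * Real.exp (-α * t)) := by continuity
  have hint : Integrable (fun t => t * Real.exp (-α * t)) μ := by
    refine Integrable.mono' (integrable_const (1/α)) hcontf.aestronglyMeasurable ?_
    filter_upwards [hae] with t ht
    rw [Real.norm_eq_abs, abs_of_nonneg (by positivity)]
    exact exp_decay_bound hα ht.le
  refine ⟨hint, ?_, ?_⟩
  · rw [integral_pos_iff_support_of_nonneg_ae ?_ hint]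
    · have hsub : Set.Ioi (0:ℝ) ⊆ Function.support (fun t => t * Real.exp (-α * t)) := by
        intro t ht
        have ht' : 0 < t := ht
        simp only [Function.mem_support]
        positivity
      have hμIoi : μ (Set.Ioi (0:ℝ)) ≠ 0 := by
        intro h0
        have : (1 : ℝ≥0∞) ≤ 0 := by
          calc (1:ℝ≥0∞) = μ Set.univ := (measure_univ).symm
            _ = μ (Set.Iic 0 ∪ Set.Ioi 0) := by rw [Set.Iic_union_Ioi]
            _ ≤ μ (Set.Iic 0) + μ (Set.Ioi 0) := measure_union_le _ _
            _ = 0 := by rw [hμ, h0, add_zero]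
        simp at this
      exact lt_of_lt_of_le (pos_iff_ne_zero.mpr hμIoi) (measure_mono hsub)
    · filter_upwards [hae] with t ht
      positivity
  · have key := hasDerivAt_integral_of_dominated_loc_of_deriv_le
      (F := fun (s : ℂ) (t : ℝ) => Complex.exp (-s * (t : ℂ)))
      (F' := fun (s : ℂ) (t : ℝ) => Complex.exp (-s * (t : ℂ)) * (-(t : ℂ)))
      (x₀ := (α : ℂ)) (bound := fun _ => 2/α) (s := ball (α:ℂ) (α/2)) (μ := μ)
      (ball_mem_nhds _ (by positivity))
      (Eventually.of_forall fun s =>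
        (Complex.continuous_exp.comp ((continuous_const.mul Complex.continuous_ofReal))).aestronglyMeasurable)
      ?_ ?_ ?_ (integrable_const _) ?_
    · rcases key with ⟨_, hd⟩
      have heq2 : (∫ t, Complex.exp (-(α:ℂ) * (t:ℂ)) * (-(t:ℂ)) ∂μ)
          = -((∫ t, t * Real.exp (-α * t) ∂μ : ℝ) : ℂ) := by
        rw [show ((∫ t, t * Real.exp (-α * t) ∂μ : ℝ) : ℂ)
            = ∫ t, ((t * Real.exp (-α * t) : ℝ) : ℂ) ∂μ from integral_ofReal.symm,
          ← integral_neg]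
        apply integral_congr_ae
        filter_upwards with t
        push_cast [Complex.ofReal_exp]
        ring_nf
      rw [← heq2]
      exact hd
    · -- Integrable F x₀
      refine Integrable.mono' (integrable_const 1)
        ((Complex.continuous_exp.comp ((continuous_const.mul Complex.continuous_ofReal))).aestronglyMeasurable) ?_
      filter_upwards [hae] with t ht
      rw [Complex.norm_exp]
      have : (-(α:ℂ) * (t:ℂ)).re = -α * t := by
        simp [Complex.mul_re]
      rw [this]
      exact Real.exp_le_one_iff.mpr (by nlinarith)
    · -- AEStronglyMeasurable F' x₀
      exact ((Complex.continuous_exp.comp ((continuous_const.mul Complex.continuous_ofReal))).mul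
        (Complex.continuous_ofReal.neg)).aestronglyMeasurable
    · -- bound
      filter_upwards [hae] with t ht s hs
      have hre : α/2 < s.re := by
        have h1 : |s.re - α| ≤ ‖s - (α:ℂ)‖ := by
          have := Complex.abs_re_le_norm (s - (α:ℂ))
          simpa using this
        have h2 : ‖s - (α:ℂ)‖ < α/2 := by
          simpa [Complex.dist_eq] using hs
        have := abs_lt.mp (lt_of_le_of_lt h1 h2)
        linarith [this.1]
      have hre0 : 0 < s.re := by linarith
      rw [norm_mul, Complex.norm_exp,
        norm_neg, Complex.norm_real, Real.norm_eq_abs, abs_of_nonneg ht.le]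
      have hre' : (-s * (t:ℂ)).re = -s.re * t := by
        simp [Complex.mul_re]
      rw [hre']
      calc Real.exp (-s.re * t) * t = t * Real.exp (-s.re * t) := mul_comm _ _
        _ ≤ 1 / s.re := exp_decay_bound hre0 ht.le
        _ ≤ 2 / α := by
            rw [div_le_div_iff₀ hre0 hα]
            linarith
    · -- h_diff
      filter_upwards with t s _
      have h := (((hasDerivAt_id s).neg.mul_const ((t:ℝ):ℂ)).cexp)
      convert h using 1
      · rfl
      · rfl
      · simp only [Pi.neg_apply, id]
        ring_nf

/-- Let `α > 0` be the real root of `ψ` and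
`ψ'(α) = ∫ t e^{-αt} d(P+Q)`. Then each of
`m_f*(s) = (1-p*(s))(1-q*(s))/(s ψ(s))`, `m_g*(s) = (1-p*(s))q*(s)/(s ψ(s))`,
`n_f*(s) = (1-q*(s))p*(s)/(s ψ(s))` has a simple pole at `s = α`: as `s → α` with
`Re s > 0`, `s ≠ α`, we have `(s-α)·m_f*(s) → p*(α)q*(α)/(α ψ'(α))`,
`(s-α)·m_g*(s) → q*(α)²/(α ψ'(α))`, and `(s-α)·n_f*(s) → p*(α)²/(α ψ'(α))`. -/
theorem stmt3
    (P Q : Measure ℝ) [IsProbabilityMeasure P] [IsProbabilityMeasure Q]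
    (hP : P (Set.Iic 0) = 0) (hQ : Q (Set.Iic 0) = 0)
    (pstar qstar ψ : ℂ → ℂ)
    (hpstar : ∀ s : ℂ, pstar s = ∫ t, Complex.exp (-s * (t : ℂ)) ∂P)
    (hqstar : ∀ s : ℂ, qstar s = ∫ t, Complex.exp (-s * (t : ℂ)) ∂Q)
    (hψ : ∀ s : ℂ, ψ s = 1 - pstar s - qstar s)
    (α : ℝ) (hα : 0 < α) (hroot : ψ (α : ℂ) = 0)
    (ψ' : ℝ) (hψ' : ψ' = ∫ t, t * Real.exp (-α * t) ∂(P + Q)) :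
    Tendsto (fun s : ℂ => (s - (α : ℂ)) * ((1 - pstar s) * (1 - qstar s) / (s * ψ s)))
      (nhdsWithin (α : ℂ) {s : ℂ | 0 < s.re ∧ s ≠ (α : ℂ)})
      (nhds (pstar (α : ℂ) * qstar (α : ℂ) / ((α : ℂ) * (ψ' : ℂ)))) ∧
    Tendsto (fun s : ℂ => (s - (α : ℂ)) * ((1 - pstar s) * qstar s / (s * ψ s)))
      (nhdsWithin (α : ℂ) {s : ℂ | 0 < s.re ∧ s ≠ (α : ℂ)})
      (nhds (qstar (α : ℂ) ^ 2 / ((α : ℂ) * (ψ' : ℂ)))) ∧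
    Tendsto (fun s : ℂ => (s - (α : ℂ)) * ((1 - qstar s) * pstar s / (s * ψ s)))
      (nhdsWithin (α : ℂ) {s : ℂ | 0 < s.re ∧ s ≠ (α : ℂ)})
      (nhds (pstar (α : ℂ) ^ 2 / ((α : ℂ) * (ψ' : ℂ)))) := by
  obtain ⟨hPint, hPpos, hPderiv⟩ := lap_main P hP hα
  obtain ⟨hQint, hQpos, hQderiv⟩ := lap_main Q hQ hα
  set a : ℝ := ∫ t, t * Real.exp (-α * t) ∂P with ha
  set b : ℝ := ∫ t, t * Real.exp (-α * t) ∂Q with hb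
  have hψ'ab : ψ' = a + b := by
    rw [hψ', integral_add_measure hPint hQint]
  have hψ'pos : 0 < ψ' := by rw [hψ'ab]; linarith
  have hDne : ((ψ' : ℝ) : ℂ) ≠ 0 := by
    exact_mod_cast ne_of_gt hψ'pos
  have hαne : ((α : ℝ) : ℂ) ≠ 0 := by exact_mod_cast ne_of_gt hα
  -- pstar, qstar as functions
  have hpfun : pstar = fun s => ∫ t, Complex.exp (-s * (t : ℂ)) ∂P := funext hpstar
  have hqfun : qstar = fun s => ∫ t, Complex.exp (-s * (t : ℂ)) ∂Q := funext hqstar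
  have hpderiv : HasDerivAt pstar (-((a : ℝ) : ℂ)) (α : ℂ) := by rw [hpfun]; exact hPderiv
  have hqderiv : HasDerivAt qstar (-((b : ℝ) : ℂ)) (α : ℂ) := by rw [hqfun]; exact hQderiv
  have hψderiv : HasDerivAt ψ ((ψ' : ℂ)) (α : ℂ) := by
    have h : HasDerivAt (fun s => 1 - pstar s - qstar s) (0 - (-((a:ℝ):ℂ)) - (-((b:ℝ):ℂ))) (α : ℂ) :=
      ((hasDerivAt_const _ 1).sub hpderiv).sub hqderiv
    have : ψ = fun s => 1 - pstar s - qstar s := funext hψ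
    rw [this]
    convert h using 1
    rw [hψ'ab]; push_cast; ring
  -- the filter
  set L := nhdsWithin (α : ℂ) {s : ℂ | 0 < s.re ∧ s ≠ (α : ℂ)} with hL
  have hLne : L ≤ 𝓝[≠] (α : ℂ) := nhdsWithin_mono _ (fun s hs => hs.2)
  have hLnhds : L ≤ 𝓝 (α : ℂ) := nhdsWithin_le_nhds
  -- slope limit
  have hslope : Tendsto (fun s : ℂ => (s - (α : ℂ)) / ψ s) L (𝓝 ((ψ' : ℂ))⁻¹) := by
    have h1 := hasDerivAt_iff_tendsto_slope.mp hψderiv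
    have h2 := h1.inv₀ hDne
    have h3 : Tendsto (fun s : ℂ => (s - (α : ℂ)) / ψ s) (𝓝[≠] (α:ℂ)) (𝓝 ((ψ' : ℂ))⁻¹) := by
      refine h2.congr fun s => ?_
      rw [slope_def_field, hroot, sub_zero, inv_div]
    exact h3.mono_left hLne
  have hptend : Tendsto pstar L (𝓝 (pstar (α : ℂ))) :=
    (hpderiv.continuousAt.tendsto).mono_left hLnhds
  have hqtend : Tendsto qstar L (𝓝 (qstar (α : ℂ))) :=
    (hqderiv.continuousAt.tendsto).mono_left hLnhds
  have hstend : Tendsto (fun s : ℂ => s) L (𝓝 ((α : ℝ) : ℂ)) :=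
    tendsto_id.mono_left hLnhds
  have hpq : pstar (α : ℂ) + qstar (α : ℂ) = 1 := by
    have := hψ (α : ℂ); rw [hroot] at this; linear_combination this
  -- generic combination
  have main : ∀ (f : ℂ → ℂ) (c : ℂ), Tendsto f L (𝓝 c) →
      Tendsto (fun s : ℂ => (s - (α : ℂ)) * (f s / (s * ψ s))) L (𝓝 (c / ((α : ℂ) * (ψ' : ℂ)))) := by
    intro f c hf
    have h1 : Tendsto (fun s : ℂ => (f s / s) * ((s - (α : ℂ)) / ψ s)) L
        (𝓝 ((c / (α : ℂ)) * ((ψ' : ℂ))⁻¹)) :=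
      (hf.div hstend hαne).mul hslope
    have heq : ∀ s : ℂ, (f s / s) * ((s - (α : ℂ)) / ψ s)
        = (s - (α : ℂ)) * (f s / (s * ψ s)) := by
      intro s
      rw [div_mul_div_comm, mul_comm (f s), mul_div_assoc]
    have hval : (c / (α : ℂ)) * ((ψ' : ℂ))⁻¹ = c / ((α : ℂ) * (ψ' : ℂ)) := by
      rw [← div_eq_mul_inv, div_div]
    rw [← hval]
    exact h1.congr heq
  have hv1 : pstar (α:ℂ) * qstar (α:ℂ) = (1 - pstar (α:ℂ)) * (1 - qstar (α:ℂ)) := by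
    linear_combination hpq
  have hv2 : qstar (α:ℂ) ^ 2 = (1 - pstar (α:ℂ)) * qstar (α:ℂ) := by
    linear_combination qstar (α:ℂ) * hpq
  have hv3 : pstar (α:ℂ) ^ 2 = (1 - qstar (α:ℂ)) * pstar (α:ℂ) := by
    linear_combination pstar (α:ℂ) * hpq
  refine ⟨?_, ?_, ?_⟩
  · rw [hv1]
    exact main _ _ ((tendsto_const_nhds.sub hptend).mul (tendsto_const_nhds.sub hqtend))
  · rw [hv2]
    exact main _ _ ((tendsto_const_nhds.sub hptend).mul hqtend)
  · rw [hv3]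
    exact main _ _ ((tendsto_const_nhds.sub hqtend).mul hptend)
end

section
/- (Renewal limit lemma of Bellman–Harris.) Let μ be a finite Borel measure on [0,∞) with μ({0}) = 0 and total mass a = μ([0,∞)) < 1. Let h : [0,∞) → ℝ be a bounded measurable function with lim_{t→∞} h(t) = c, and let v : [0,∞) → ℝ be a bounded measurable function satisfying v(t) = ∫_{[0,t]} v(t-y) dμ(y) + h(t) for all t ≥ 0. Then lim_{t→∞} v(t) = c/(1-a). -/
open MeasureTheory Set Filter


lemma keylem
    (μ : Measure ℝ) [IsFiniteMeasure μ]
    (a : ℝ) (ha : a = (μ Set.univ).toReal) (ha1 : a < 1)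
    (w : ℝ → ℝ) (hwm : Measurable w) (M : ℝ) (hwb : ∀ t, |w t| ≤ M)
    (g : ℝ → ℝ) (hg : Tendsto g atTop (nhds 0))
    (heq : ∀ t ≥ (0:ℝ), w t = (∫ y in Set.Icc 0 t, w (t - y) ∂μ) + g t) :
    Tendsto w atTop (nhds 0) := by
  have hM0 : 0 ≤ M := (abs_nonneg _).trans (hwb 0)
  have ha0 : 0 ≤ a := ha ▸ ENNReal.toReal_nonneg
  -- integrability
  have hint : ∀ t : ℝ, ∀ s : Set ℝ, IntegrableOn (fun y => w (t - y)) s μ := by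
    intro t s
    refine Integrable.integrableOn ?_
    refine (integrable_const M).mono'
      ((hwm.comp (measurable_const.sub measurable_id)).aestronglyMeasurable) ?_
    exact ae_of_all _ fun y => by simpa using hwb (t - y)
  have habs : ∀ t : ℝ, ∀ s : Set ℝ, IntegrableOn (fun y => |w (t - y)|) s μ :=
    fun t s => (hint t s).abs
  have hbd : IsBoundedUnder (· ≤ ·) atTop (fun t => |w t|) :=
    isBoundedUnder_of ⟨M, fun t => hwb t⟩
  have hbdg : IsBoundedUnder (· ≥ ·) atTop (fun t => |w t|) :=
    isBoundedUnder_of ⟨0, fun t => abs_nonneg _⟩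
  have hcb : IsCoboundedUnder (· ≤ ·) atTop (fun t => |w t|) :=
    hbdg.isCoboundedUnder_le
  set L := limsup (fun t => |w t|) atTop with hLdef
  have hL0 : 0 ≤ L :=
    le_limsup_of_frequently_le (Frequently.of_forall fun t => abs_nonneg _) hbd
  -- tail measure tendsto
  have htail : Tendsto (fun T : ℝ => (μ (Ioi T)).toReal) atTop (nhds 0) := by
    have h1 : Tendsto (fun T : ℝ => (μ (Iic T)).toReal) atTop (nhds a) := by
      rw [ha]
      exact (ENNReal.tendsto_toReal (measure_ne_top μ univ)).comp (tendsto_measure_Iic_atTop μ)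
    have h2 : ∀ T : ℝ, (μ (Ioi T)).toReal = a - (μ (Iic T)).toReal := by
      intro T
      have : (μ (Iic T)).toReal + (μ (Ioi T)).toReal = a := by
        rw [← ENNReal.toReal_add (measure_ne_top _ _) (measure_ne_top _ _),
          ← measure_union (Iic_disjoint_Ioi le_rfl) measurableSet_Ioi, Iic_union_Ioi, ha]
      linarith
    simp only [h2]
    have := Tendsto.sub (tendsto_const_nhds : Tendsto (fun _ : ℝ => a) atTop (nhds a)) h1
    simpa using this
  -- Key: L ≤ a * (L + ε) + M * ε for all ε > 0
  have key : ∀ ε > (0:ℝ), L ≤ a * (L + ε) + M * ε := by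
    intro ε hε
    obtain ⟨T, hT0, hTε⟩ : ∃ T : ℝ, 0 ≤ T ∧ (μ (Ioi T)).toReal < ε := by
      rcases ((htail.eventually (gt_mem_nhds hε)).and (eventually_ge_atTop (0:ℝ))).exists
        with ⟨T, h1, h2⟩
      exact ⟨T, h2, h1⟩
    obtain ⟨S, hS0, hS⟩ : ∃ S : ℝ, 0 ≤ S ∧ ∀ t ≥ S, |w t| ≤ L + ε := by
      have h := eventually_lt_of_limsup_lt (show L < L + ε by linarith) hbd
      rcases (h.and (eventually_ge_atTop (0:ℝ))).exists_forall_of_atTop with ⟨S, hS⟩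
      exact ⟨max S 0, le_max_right _ _, fun t ht =>
        ((hS t (le_trans (le_max_left _ _) ht)).1).le⟩
    have hev : ∀ᶠ t in atTop, |w t| ≤ a * (L + ε) + M * ε + |g t| := by
      filter_upwards [eventually_ge_atTop (S + T)] with t ht
      have ht0 : 0 ≤ t := le_trans (by linarith) ht
      have htT : T ≤ t := le_trans (by linarith) ht
      have hsplit : Icc (0:ℝ) t = Icc 0 T ∪ Ioc T t := (Icc_union_Ioc_eq_Icc hT0 htT).symm
      have hb1 : |∫ y in Icc (0:ℝ) T, w (t - y) ∂μ| ≤ a * (L + ε) := by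
        calc |∫ y in Icc (0:ℝ) T, w (t - y) ∂μ| ≤ ∫ y in Icc (0:ℝ) T, |w (t - y)| ∂μ := by
              simpa using norm_integral_le_integral_norm (μ := μ.restrict (Icc 0 T))
                (fun y => w (t - y))
          _ ≤ ∫ _ in Icc (0:ℝ) T, (L + ε) ∂μ := by
              refine setIntegral_mono_on (habs t _) (integrable_const _) measurableSet_Icc ?_
              intro y hy
              exact hS _ (by rcases hy with ⟨hy0, hyT⟩; linarith)
          _ = (μ (Icc (0:ℝ) T)).toReal * (L + ε) := by
              rw [setIntegral_const, smul_eq_mul]; rfl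
          _ ≤ a * (L + ε) := by
              have : (μ (Icc (0:ℝ) T)).toReal ≤ a := by
                rw [ha]
                exact ENNReal.toReal_mono (measure_ne_top _ _) (measure_mono (subset_univ _))
              nlinarith
      have hb2 : |∫ y in Ioc T t, w (t - y) ∂μ| ≤ M * ε := by
        calc |∫ y in Ioc T t, w (t - y) ∂μ| ≤ ∫ y in Ioc T t, |w (t - y)| ∂μ := by
              simpa using norm_integral_le_integral_norm (μ := μ.restrict (Ioc T t))
                (fun y => w (t - y))
          _ ≤ ∫ _ in Ioc T t, M ∂μ := by
              refine setIntegral_mono_on (habs t _) (integrable_const _) measurableSet_Ioc ?_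
              intro y _; exact hwb _
          _ = (μ (Ioc T t)).toReal * M := by rw [setIntegral_const, smul_eq_mul]; rfl
          _ ≤ M * ε := by
              have : (μ (Ioc T t)).toReal ≤ (μ (Ioi T)).toReal :=
                ENNReal.toReal_mono (measure_ne_top _ _) (measure_mono Ioc_subset_Ioi_self)
              nlinarith
      have : |w t| ≤ |∫ y in Icc (0:ℝ) t, w (t - y) ∂μ| + |g t| := by
        rw [heq t ht0]; exact abs_add_le _ _
      have hun : ∫ y in Icc (0:ℝ) t, w (t - y) ∂μ
          = (∫ y in Icc (0:ℝ) T, w (t - y) ∂μ) + ∫ y in Ioc T t, w (t - y) ∂μ := by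
        rw [hsplit]
        exact setIntegral_union ((Iic_disjoint_Ioc le_rfl).mono Icc_subset_Iic_self le_rfl) measurableSet_Ioc
          (hint t _) (hint t _)
      calc |w t| ≤ |∫ y in Icc (0:ℝ) t, w (t - y) ∂μ| + |g t| := this
        _ ≤ |∫ y in Icc (0:ℝ) T, w (t - y) ∂μ| + |∫ y in Ioc T t, w (t - y) ∂μ| + |g t| := by
            rw [hun]; exact add_le_add (abs_add_le _ _) le_rfl
        _ ≤ a * (L + ε) + M * ε + |g t| := by linarith
    have hlim : Tendsto (fun t => a * (L + ε) + M * ε + |g t|) atTop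
        (nhds (a * (L + ε) + M * ε + |0|)) := tendsto_const_nhds.add hg.abs
    calc L ≤ limsup (fun t => a * (L + ε) + M * ε + |g t|) atTop :=
          limsup_le_limsup hev hcb hlim.isBoundedUnder_le
      _ = a * (L + ε) + M * ε := by simpa using hlim.limsup_eq
  have hLaL : L ≤ a * L := by
    by_contra hcon
    push_neg at hcon
    set ε := (L - a * L) / (a + M + 1) with hεdef
    have haM : (0:ℝ) < a + M + 1 := by linarith
    have hε : 0 < ε := div_pos (by linarith) haM
    have h2 : ε * (a + M + 1) = L - a * L := div_mul_cancel₀ _ (ne_of_gt haM)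
    have h3 := key ε hε
    nlinarith
  have hLzero : L = 0 := le_antisymm (by nlinarith) hL0
  have hliminf : liminf (fun t => |w t|) atTop = 0 := by
    have h1 : liminf (fun t => |w t|) atTop ≤ L := liminf_le_limsup hbd hbdg
    have h2 : 0 ≤ liminf (fun t => |w t|) atTop :=
      le_liminf_of_le hbd.isCoboundedUnder_ge (Eventually.of_forall fun t => abs_nonneg _)
    linarith [hLzero ▸ h1]
  have habs0 : Tendsto (fun t => |w t|) atTop (nhds 0) :=
    tendsto_of_liminf_eq_limsup hliminf hLzero hbd hbdg
  exact (tendsto_zero_iff_abs_tendsto_zero w).mpr habs0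

/-- **Renewal limit lemma of Bellman–Harris.**
Let `μ` be a finite Borel measure on `[0,∞)` with `μ({0}) = 0` and total mass
`a = μ([0,∞)) < 1`. Let `h` be a bounded measurable function with `h(t) → c` as `t → ∞`,
and let `v` be a bounded measurable function satisfying
`v(t) = ∫_{[0,t]} v(t-y) dμ(y) + h(t)` for all `t ≥ 0`. Then `v(t) → c/(1-a)`. -/
theorem stmt5
    (μ : Measure ℝ) [IsFiniteMeasure μ]
    (hsupp : μ (Set.Iio 0) = 0) (h0 : μ {0} = 0)
    (a : ℝ) (ha : a = (μ Set.univ).toReal) (ha1 : a < 1)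
    (h v : ℝ → ℝ) (hhm : Measurable h) (hvm : Measurable v)
    (hhb : ∃ M : ℝ, ∀ t : ℝ, |h t| ≤ M) (hvb : ∃ M : ℝ, ∀ t : ℝ, |v t| ≤ M)
    (c : ℝ) (hc : Tendsto h atTop (nhds c))
    (heq : ∀ t ≥ (0:ℝ), v t = (∫ y in Set.Icc 0 t, v (t - y) ∂μ) + h t) :
    Tendsto v atTop (nhds (c / (1 - a))) := by
  obtain ⟨M, hvb⟩ := hvb
  set k := c / (1 - a) with hk
  have ha1' : (1:ℝ) - a ≠ 0 := by intro hh; linarith [sub_eq_zero.mp hh]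
  set w : ℝ → ℝ := fun t => v t - k with hw
  set g : ℝ → ℝ := fun t => k * (μ (Set.Icc 0 t)).toReal + h t - k with hgdef
  have hwm : Measurable w := hvm.sub measurable_const
  have hwb : ∀ t, |w t| ≤ M + |k| := fun t => (abs_sub _ _).trans (add_le_add (hvb t) le_rfl)
  have hIic : ∀ t ≥ (0:ℝ), μ (Set.Icc 0 t) = μ (Set.Iic t) := by
    intro t ht
    refine le_antisymm (measure_mono Set.Icc_subset_Iic_self) ?_
    calc μ (Set.Iic t) ≤ μ (Set.Iio 0 ∪ Set.Icc 0 t) := by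
          refine measure_mono fun x hx => ?_
          rcases lt_or_ge x 0 with hx0 | hx0
          · exact Or.inl hx0
          · exact Or.inr ⟨hx0, hx⟩
      _ ≤ μ (Set.Iio 0) + μ (Set.Icc 0 t) := measure_union_le _ _
      _ = μ (Set.Icc 0 t) := by rw [hsupp, zero_add]
  have hg : Tendsto g atTop (nhds 0) := by
    have h1 : Tendsto (fun t : ℝ => k * (μ (Set.Iic t)).toReal + h t - k) atTop
        (nhds (k * a + c - k)) := by
      refine Tendsto.sub (Tendsto.add (Tendsto.const_mul k ?_) hc) tendsto_const_nhds
      rw [ha]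
      exact (ENNReal.tendsto_toReal (measure_ne_top μ _)).comp (tendsto_measure_Iic_atTop μ)
    have h2 : k * a + c - k = 0 := by
      have : k * (1 - a) = c := by rw [hk]; exact div_mul_cancel₀ _ ha1'
      linarith
    rw [← h2]
    refine Tendsto.congr' ?_ h1
    filter_upwards [eventually_ge_atTop (0:ℝ)] with t ht
    rw [hgdef]
    simp only [hIic t ht]
  have hint : ∀ t : ℝ, IntegrableOn (fun y => v (t - y)) (Set.Icc 0 t) μ := by
    intro t
    refine Integrable.integrableOn ?_
    refine (integrable_const M).mono'
      ((hvm.comp (measurable_const.sub measurable_id)).aestronglyMeasurable) ?_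
    exact ae_of_all _ fun y => by simpa using hvb (t - y)
  have heqw : ∀ t ≥ (0:ℝ), w t = (∫ y in Set.Icc 0 t, w (t - y) ∂μ) + g t := by
    intro t ht
    have : (∫ y in Set.Icc 0 t, w (t - y) ∂μ)
        = (∫ y in Set.Icc 0 t, v (t - y) ∂μ) - (μ (Set.Icc 0 t)).toReal * k := by
      rw [hw]
      rw [integral_sub (hint t) (integrable_const k), setIntegral_const, smul_eq_mul]; rfl
    rw [this]
    simp only [hw, hgdef, this, heq t ht]
    ring
  have := keylem μ a ha ha1 w hwm (M + |k|) hwb g hg heqw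
  have : Tendsto (fun t => w t + k) atTop (nhds (0 + k)) := this.add tendsto_const_nhds
  simpa [hw] using this
end

section
/- Suppose m_f, m_g : [0,∞) → [0,∞) are measurable functions satisfying the renewal system m_f(t) = P((t,∞)) + ∫_{[0,t]} (m_f(t-τ) + m_g(t-τ)) dP(τ) and m_g(t) = ∫_{[0,t]} (m_f(t-τ) + m_g(t-τ)) dQ(τ) for all t ≥ 0, and suppose m_f(t) + m_g(t) ≤ C e^{βt} for some constants C, β ≥ 0. Let α > 0 be the real root of ψ. Then for every real s > max(α, β): ∫₀^∞ e^{-st} m_f(t) dt = (1-p*(s))(1-q*(s))/(s·ψ(s)) and ∫₀^∞ e^{-st} m_g(t) dt = (1-p*(s))q*(s)/(s·ψ(s)). -/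
open MeasureTheory Set Filter

open ENNReal

lemma lint_Ici_shift (f : ℝ → ℝ≥0∞) (τ : ℝ) :
    ∫⁻ t in Ici τ, f t = ∫⁻ u in Ici 0, f (u + τ) := by
  rw [← lintegral_indicator measurableSet_Ici, ← lintegral_indicator measurableSet_Ici,
    ← lintegral_add_right_eq_self (fun t => (Ici τ).indicator f t) τ]
  congr 1; ext u
  by_cases h : 0 ≤ u
  · simp [indicator_apply, h, le_add_iff_nonneg_left]
  · simp [indicator_apply, h, le_add_iff_nonneg_left]

lemma conv_lap (μ : Measure ℝ) [IsProbabilityMeasure μ] (hμ : μ (Iic 0) = 0)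
    (m : ℝ → ℝ) (hm : Measurable m) (s : ℝ) :
    ∫⁻ t in Ioi (0:ℝ), ENNReal.ofReal (Real.exp (-s*t)) *
        (∫⁻ τ in Icc 0 t, ENNReal.ofReal (m (t-τ)) ∂μ) =
    (∫⁻ τ, ENNReal.ofReal (Real.exp (-s*τ)) ∂μ) *
        ∫⁻ u in Ioi (0:ℝ), ENNReal.ofReal (Real.exp (-s*u)) * ENNReal.ofReal (m u) := by
  have haeμ : ∀ᵐ τ ∂μ, 0 < τ := by
    rw [ae_iff]
    simp only [not_lt]; exact hμ
  set S : Set (ℝ × ℝ) := {q : ℝ × ℝ | 0 ≤ q.2 ∧ q.2 ≤ q.1} with hS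
  set h : ℝ × ℝ → ℝ≥0∞ := fun q => ENNReal.ofReal (Real.exp (-s*q.1)) * ENNReal.ofReal (m (q.1 - q.2)) with hh
  have hSmeas : MeasurableSet S := by
    apply MeasurableSet.inter
    · exact measurableSet_le measurable_const measurable_snd
    · exact measurableSet_le measurable_snd measurable_fst
  have hhmeas : Measurable h := by
    exact ((Real.measurable_exp.comp (measurable_fst.const_mul (-s)))).ennreal_ofReal.mul
      ((hm.comp (measurable_fst.sub measurable_snd))).ennreal_ofReal
  have hexpmeas : Measurable fun τ : ℝ => ENNReal.ofReal (Real.exp (-s*τ)) :=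
    ((Real.measurable_exp.comp (measurable_id.const_mul (-s)))).ennreal_ofReal
  have hKmeas : Measurable fun u : ℝ => ENNReal.ofReal (Real.exp (-s*u)) * ENNReal.ofReal (m u) := by
    exact ((Real.measurable_exp.comp (measurable_id.const_mul (-s)))).ennreal_ofReal.mul hm.ennreal_ofReal
  have step1 : ∀ t : ℝ, ENNReal.ofReal (Real.exp (-s*t)) *
        (∫⁻ τ in Icc 0 t, ENNReal.ofReal (m (t-τ)) ∂μ) =
      ∫⁻ τ, S.indicator h (t, τ) ∂μ := by
    intro t
    have hmt : Measurable fun τ : ℝ => ENNReal.ofReal (m (t - τ)) :=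
      (hm.comp (measurable_const.sub measurable_id)).ennreal_ofReal
    rw [← lintegral_const_mul _ hmt, ← lintegral_indicator measurableSet_Icc]
    refine lintegral_congr fun τ => ?_
    by_cases hmem : (t, τ) ∈ S
    · rw [indicator_of_mem hmem, indicator_of_mem (mem_Icc.mpr hmem)]
    · rw [indicator_of_notMem hmem, indicator_of_notMem (fun hc => hmem (mem_Icc.mp hc))]
  calc ∫⁻ t in Ioi (0:ℝ), ENNReal.ofReal (Real.exp (-s*t)) *
        (∫⁻ τ in Icc 0 t, ENNReal.ofReal (m (t-τ)) ∂μ)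
      = ∫⁻ t in Ioi (0:ℝ), (∫⁻ τ, S.indicator h (t, τ) ∂μ) := by
        exact lintegral_congr fun t => step1 t
    _ = ∫⁻ τ, (∫⁻ t in Ioi (0:ℝ), S.indicator h (t, τ)) ∂μ := by
        exact lintegral_lintegral_swap (μ := volume.restrict (Ioi (0:ℝ))) (ν := μ)
          (f := fun t τ => S.indicator h (t, τ)) ((hhmeas.indicator hSmeas).aemeasurable)
    _ = ∫⁻ τ, (ENNReal.ofReal (Real.exp (-s*τ)) *
          ∫⁻ u in Ioi (0:ℝ), ENNReal.ofReal (Real.exp (-s*u)) * ENNReal.ofReal (m u)) ∂μ := by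
        apply lintegral_congr_ae
        filter_upwards [haeμ] with τ hτ
        have e1 : ∀ t : ℝ, S.indicator h (t, τ) = (Ici τ).indicator (fun t => h (t, τ)) t := by
          intro t
          simp only [indicator_apply, hS, mem_setOf_eq, mem_Ici, hτ.le, true_and]
        calc ∫⁻ t in Ioi (0:ℝ), S.indicator h (t, τ)
            = ∫⁻ t in Ioi (0:ℝ), (Ici τ).indicator (fun t => h (t, τ)) t := by
              exact lintegral_congr fun t => e1 t
          _ = ∫⁻ t, (Ioi (0:ℝ)).indicator ((Ici τ).indicator (fun t => h (t, τ))) t := by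
              rw [lintegral_indicator measurableSet_Ioi]
          _ = ∫⁻ t, (Ici τ).indicator (fun t => h (t, τ)) t := by
              congr 1; ext t
              by_cases ht : τ ≤ t
              · simp [indicator_apply, ht, lt_of_lt_of_le hτ ht]
              · simp [indicator_apply, ht]
          _ = ∫⁻ t in Ici τ, h (t, τ) := lintegral_indicator measurableSet_Ici _
          _ = ∫⁻ u in Ici (0:ℝ), h (u + τ, τ) := lint_Ici_shift _ τ
          _ = ∫⁻ u in Ici (0:ℝ), ENNReal.ofReal (Real.exp (-s*τ)) *
                (ENNReal.ofReal (Real.exp (-s*u)) * ENNReal.ofReal (m u)) := by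
              apply lintegral_congr; intro u
              simp only [hh, add_sub_cancel_right]
              rw [show -s*(u+τ) = -s*u + -s*τ by ring, Real.exp_add,
                ENNReal.ofReal_mul (Real.exp_nonneg _)]
              ring
          _ = ENNReal.ofReal (Real.exp (-s*τ)) *
                ∫⁻ u in Ici (0:ℝ), ENNReal.ofReal (Real.exp (-s*u)) * ENNReal.ofReal (m u) := by
              exact lintegral_const_mul _ hKmeas
          _ = ENNReal.ofReal (Real.exp (-s*τ)) *
                ∫⁻ u in Ioi (0:ℝ), ENNReal.ofReal (Real.exp (-s*u)) * ENNReal.ofReal (m u) := by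
              rw [setLIntegral_congr (Ioi_ae_eq_Ici (a := (0:ℝ))).symm]
    _ = (∫⁻ τ, ENNReal.ofReal (Real.exp (-s*τ)) ∂μ) *
          ∫⁻ u in Ioi (0:ℝ), ENNReal.ofReal (Real.exp (-s*u)) * ENNReal.ofReal (m u) :=
        lintegral_mul_const _ hexpmeas

lemma exp_int_val {s τ : ℝ} (hs : 0 < s) (hτ : 0 ≤ τ) :
    ∫ t in Ioo 0 τ, Real.exp (-s*t) = (1 - Real.exp (-s*τ))/s := by
  rw [← integral_Ioc_eq_integral_Ioo, ← intervalIntegral.integral_of_le hτ]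
  have h1 : ∫ x in (0:ℝ)..τ, Real.exp (-s*x) = (-s)⁻¹ • ∫ x in (-s*0)..(-s*τ), Real.exp x :=
    intervalIntegral.integral_comp_mul_left Real.exp (by linarith : (-s) ≠ 0)
  rw [h1, integral_exp]
  simp only [mul_zero, Real.exp_zero, smul_eq_mul]
  field_simp
  ring

lemma surv_lap (P : Measure ℝ) [IsProbabilityMeasure P] (hP : P (Iic 0) = 0)
    {s : ℝ} (hs : 0 < s) :
    ∫⁻ t in Ioi (0:ℝ), ENNReal.ofReal (Real.exp (-s*t)) * P (Ioi t) =
      ENNReal.ofReal ((1 - ∫ τ, Real.exp (-s*τ) ∂P) / s) := by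
  have haeP : ∀ᵐ τ ∂P, 0 < τ := by
    rw [ae_iff]; simp only [not_lt]; exact hP
  have hexpm : Measurable fun τ : ℝ => Real.exp (-s*τ) :=
    Real.measurable_exp.comp (measurable_id.const_mul (-s))
  have hintP : Integrable (fun τ => Real.exp (-s*τ)) P := by
    refine Integrable.mono' (integrable_const 1) hexpm.aestronglyMeasurable ?_
    filter_upwards [haeP] with τ hτ
    rw [Real.norm_eq_abs, abs_of_nonneg (Real.exp_nonneg _)]
    exact Real.exp_le_one_iff.mpr (by nlinarith)
  set T : Set (ℝ × ℝ) := {q : ℝ × ℝ | q.1 < q.2} with hT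
  set h : ℝ × ℝ → ℝ≥0∞ := fun q => ENNReal.ofReal (Real.exp (-s*q.1)) with hh
  have hTmeas : MeasurableSet T := measurableSet_lt measurable_fst measurable_snd
  have hhmeas : Measurable h :=
    (Real.measurable_exp.comp (measurable_fst.const_mul (-s))).ennreal_ofReal
  have step1 : ∀ t : ℝ, ENNReal.ofReal (Real.exp (-s*t)) * P (Ioi t) =
      ∫⁻ τ, T.indicator h (t, τ) ∂P := by
    intro t
    rw [← setLIntegral_const (Ioi t) (ENNReal.ofReal (Real.exp (-s*t))),
      ← lintegral_indicator measurableSet_Ioi]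
    refine lintegral_congr fun τ => ?_
    by_cases hmem : (t, τ) ∈ T
    · rw [indicator_of_mem (show τ ∈ Ioi t from hmem), indicator_of_mem hmem]
    · rw [indicator_of_notMem (show τ ∉ Ioi t from hmem), indicator_of_notMem hmem]
  calc ∫⁻ t in Ioi (0:ℝ), ENNReal.ofReal (Real.exp (-s*t)) * P (Ioi t)
      = ∫⁻ t in Ioi (0:ℝ), (∫⁻ τ, T.indicator h (t, τ) ∂P) := lintegral_congr fun t => step1 t
    _ = ∫⁻ τ, (∫⁻ t in Ioi (0:ℝ), T.indicator h (t, τ)) ∂P := by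
        exact lintegral_lintegral_swap (μ := volume.restrict (Ioi (0:ℝ))) (ν := P)
          (f := fun t τ => T.indicator h (t, τ)) ((hhmeas.indicator hTmeas).aemeasurable)
    _ = ∫⁻ τ, ENNReal.ofReal ((1 - Real.exp (-s*τ))/s) ∂P := by
        apply lintegral_congr_ae
        filter_upwards [haeP] with τ hτ
        have hI : IntegrableOn (fun t => Real.exp (-s*t)) (Ioo 0 τ) :=
          (exp_neg_integrableOn_Ioi 0 hs).mono_set Ioo_subset_Ioi_self
        calc ∫⁻ t in Ioi (0:ℝ), T.indicator h (t, τ)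
            = ∫⁻ t in Ioi (0:ℝ), (Iio τ).indicator (fun t => ENNReal.ofReal (Real.exp (-s*t))) t := by
              refine lintegral_congr fun t => ?_
              by_cases hmem : (t, τ) ∈ T
              · rw [indicator_of_mem hmem, indicator_of_mem (show t ∈ Iio τ from hmem)]
              · rw [indicator_of_notMem hmem, indicator_of_notMem (show t ∉ Iio τ from hmem)]
          _ = ∫⁻ t in Ioo (0:ℝ) τ, ENNReal.ofReal (Real.exp (-s*t)) := by
              rw [← lintegral_indicator measurableSet_Ioi, indicator_indicator, Ioi_inter_Iio,
                lintegral_indicator measurableSet_Ioo]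
          _ = ENNReal.ofReal (∫ t in Ioo (0:ℝ) τ, Real.exp (-s*t)) := by
              rw [ofReal_integral_eq_lintegral_ofReal hI (ae_of_all _ fun t => Real.exp_nonneg _)]
          _ = ENNReal.ofReal ((1 - Real.exp (-s*τ))/s) := by rw [exp_int_val hs hτ.le]
    _ = ENNReal.ofReal (∫ τ, (1 - Real.exp (-s*τ))/s ∂P) := by
        refine (ofReal_integral_eq_lintegral_ofReal ?_ ?_).symm
        · exact ((integrable_const 1).sub hintP).div_const s
        · filter_upwards [haeP] with τ hτ
          have : Real.exp (-s*τ) ≤ 1 := Real.exp_le_one_iff.mpr (by nlinarith)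
          exact div_nonneg (by linarith) hs.le
    _ = ENNReal.ofReal ((1 - ∫ τ, Real.exp (-s*τ) ∂P) / s) := by
        rw [integral_div, integral_sub (integrable_const 1) hintP]
        simp

lemma int_exp_prob (μ : Measure ℝ) [IsProbabilityMeasure μ] (hμ : μ (Iic 0) = 0)
    {s : ℝ} (hs : 0 < s) : Integrable (fun τ => Real.exp (-s*τ)) μ := by
  have haeμ : ∀ᵐ τ ∂μ, 0 < τ := by rw [ae_iff]; simp only [not_lt]; exact hμ
  refine Integrable.mono' (integrable_const 1)
    (Real.measurable_exp.comp (measurable_id.const_mul (-s))).aestronglyMeasurable ?_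
  filter_upwards [haeμ] with τ hτ
  rw [Real.norm_eq_abs, abs_of_nonneg (Real.exp_nonneg _)]
  exact Real.exp_le_one_iff.mpr (by nlinarith)


/-- Suppose `m_f, m_g : [0,∞) → [0,∞)` are measurable and satisfy the
renewal system
`m_f(t) = P((t,∞)) + ∫_{[0,t]} (m_f(t-τ) + m_g(t-τ)) dP(τ)`,
`m_g(t) = ∫_{[0,t]} (m_f(t-τ) + m_g(t-τ)) dQ(τ)` for `t ≥ 0`, with
`m_f(t) + m_g(t) ≤ C e^{βt}`. Let `α > 0` be the real root of `ψ`. Then for every real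
`s > max(α, β)`:
`∫₀^∞ e^{-st} m_f(t) dt = (1-p*(s))(1-q*(s))/(s ψ(s))` and
`∫₀^∞ e^{-st} m_g(t) dt = (1-p*(s)) q*(s)/(s ψ(s))`. -/
theorem stmt6
    (P Q : Measure ℝ) [IsProbabilityMeasure P] [IsProbabilityMeasure Q]
    (hP : P (Set.Iic 0) = 0) (hQ : Q (Set.Iic 0) = 0)
    (pstar qstar ψ : ℝ → ℝ)
    (hpstar : ∀ s : ℝ, pstar s = ∫ t, Real.exp (-s * t) ∂P)
    (hqstar : ∀ s : ℝ, qstar s = ∫ t, Real.exp (-s * t) ∂Q)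
    (hψ : ∀ s : ℝ, ψ s = 1 - pstar s - qstar s)
    (m_f m_g : ℝ → ℝ) (hmf : Measurable m_f) (hmg : Measurable m_g)
    (hnnf : ∀ t, 0 ≤ m_f t) (hnng : ∀ t, 0 ≤ m_g t)
    (heqf : ∀ t ≥ (0:ℝ), m_f t =
      (P (Set.Ioi t)).toReal + ∫ τ in Set.Icc 0 t, (m_f (t - τ) + m_g (t - τ)) ∂P)
    (heqg : ∀ t ≥ (0:ℝ), m_g t =
      ∫ τ in Set.Icc 0 t, (m_f (t - τ) + m_g (t - τ)) ∂Q)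
    (C β : ℝ) (hC : 0 ≤ C) (hβ : 0 ≤ β)
    (hgrow : ∀ t ≥ (0:ℝ), m_f t + m_g t ≤ C * Real.exp (β * t))
    (α : ℝ) (hα : 0 < α) (hroot : ψ α = 0) :
    ∀ s : ℝ, max α β < s →
      (∫ t in Set.Ioi (0:ℝ), Real.exp (-s * t) * m_f t) =
        (1 - pstar s) * (1 - qstar s) / (s * ψ s) ∧
      (∫ t in Set.Ioi (0:ℝ), Real.exp (-s * t) * m_g t) =
        (1 - pstar s) * qstar s / (s * ψ s) := by
  intro s hs
  have hsα : α < s := (le_max_left α β).trans_lt hs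
  have hsβ : β < s := (le_max_right α β).trans_lt hs
  have hs0 : 0 < s := hα.trans hsα
  have haeP : ∀ᵐ τ ∂P, 0 < τ := by rw [ae_iff]; simp only [not_lt]; exact hP
  have hexpm : Measurable fun τ : ℝ => Real.exp (-s*τ) :=
    Real.measurable_exp.comp (measurable_id.const_mul (-s))
  have hintP : Integrable (fun τ => Real.exp (-s*τ)) P := int_exp_prob P hP hs0
  have hintQ : Integrable (fun τ => Real.exp (-s*τ)) Q := int_exp_prob Q hQ hs0
  have hpofReal : ∫⁻ τ, ENNReal.ofReal (Real.exp (-s*τ)) ∂P = ENNReal.ofReal (pstar s) := by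
    rw [hpstar s]
    exact (ofReal_integral_eq_lintegral_ofReal hintP (ae_of_all _ fun τ => Real.exp_nonneg _)).symm
  have hqofReal : ∫⁻ τ, ENNReal.ofReal (Real.exp (-s*τ)) ∂Q = ENNReal.ofReal (qstar s) := by
    rw [hqstar s]
    exact (ofReal_integral_eq_lintegral_ofReal hintQ (ae_of_all _ fun τ => Real.exp_nonneg _)).symm
  have hp0 : 0 ≤ pstar s := by
    rw [hpstar s]; exact integral_nonneg fun τ => Real.exp_nonneg _
  have hq0 : 0 ≤ qstar s := by
    rw [hqstar s]; exact integral_nonneg fun τ => Real.exp_nonneg _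
  have hp1 : pstar s ≤ 1 := by
    rw [hpstar s]
    calc ∫ t, Real.exp (-s * t) ∂P ≤ ∫ _t, (1:ℝ) ∂P := by
          refine integral_mono_ae hintP (integrable_const 1) ?_
          filter_upwards [haeP] with τ hτ
          exact Real.exp_le_one_iff.mpr (by nlinarith)
      _ = 1 := by simp
  set LF := ∫⁻ t in Ioi (0:ℝ), ENNReal.ofReal (Real.exp (-s*t)) * ENNReal.ofReal (m_f t) with hLFdef
  set LG := ∫⁻ t in Ioi (0:ℝ), ENNReal.ofReal (Real.exp (-s*t)) * ENNReal.ofReal (m_g t) with hLGdef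
  set Lsum := ∫⁻ t in Ioi (0:ℝ), ENNReal.ofReal (Real.exp (-s*t)) * ENNReal.ofReal (m_f t + m_g t) with hLsumdef
  have hmeasEf : Measurable fun t : ℝ => ENNReal.ofReal (Real.exp (-s*t)) := hexpm.ennreal_ofReal
  have hmeasF : Measurable fun t : ℝ => ENNReal.ofReal (Real.exp (-s*t)) * ENNReal.ofReal (m_f t) :=
    hmeasEf.mul hmf.ennreal_ofReal
  have hsum : Lsum = LF + LG := by
    rw [hLsumdef, hLFdef, hLGdef, ← lintegral_add_left hmeasF]
    refine lintegral_congr fun t => ?_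
    rw [ENNReal.ofReal_add (hnnf t) (hnng t), mul_add]
  have hLsum_lt : Lsum < ⊤ := by
    have hint : IntegrableOn (fun t => C * Real.exp (-(s - β)*t)) (Ioi (0:ℝ)) :=
      (exp_neg_integrableOn_Ioi 0 (show (0:ℝ) < s - β by linarith)).const_mul C
    refine lt_of_le_of_lt ?_ hint.lintegral_lt_top
    rw [hLsumdef]
    refine setLIntegral_mono ((measurable_const.mul
      (Real.measurable_exp.comp (measurable_id.const_mul (-(s-β))))).ennreal_ofReal) ?_
    intro t ht
    rw [← ENNReal.ofReal_mul (Real.exp_nonneg _)]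
    apply ENNReal.ofReal_le_ofReal
    calc Real.exp (-s*t) * (m_f t + m_g t)
        ≤ Real.exp (-s*t) * (C * Real.exp (β*t)) :=
          mul_le_mul_of_nonneg_left (hgrow t (le_of_lt ht)) (Real.exp_nonneg _)
      _ = C * Real.exp (-(s-β)*t) := by
          rw [show -(s-β)*t = -s*t + β*t by ring, Real.exp_add]; ring
  have hLF_le : LF ≤ Lsum :=
    lintegral_mono fun t => mul_le_mul_right
      (ENNReal.ofReal_le_ofReal (le_add_of_nonneg_right (hnng t))) _
  have hLG_le : LG ≤ Lsum :=
    lintegral_mono fun t => mul_le_mul_right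
      (ENNReal.ofReal_le_ofReal (le_add_of_nonneg_left (hnnf t))) _
  have hLsum_ne : Lsum ≠ ⊤ := hLsum_lt.ne
  have hLF_ne : LF ≠ ⊤ := (hLF_le.trans_lt hLsum_lt).ne
  have hLG_ne : LG ≠ ⊤ := (hLG_le.trans_lt hLsum_lt).ne
  have hinner : ∀ (μ : Measure ℝ) [IsProbabilityMeasure μ], ∀ t : ℝ, 0 ≤ t →
      ENNReal.ofReal (∫ τ in Icc 0 t, (m_f (t - τ) + m_g (t - τ)) ∂μ) =
      ∫⁻ τ in Icc 0 t, ENNReal.ofReal (m_f (t - τ) + m_g (t - τ)) ∂μ := by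
    intro μ _ t ht
    refine ofReal_integral_eq_lintegral_ofReal ?_
      (ae_of_all _ fun τ => add_nonneg (hnnf _) (hnng _))
    refine Integrable.mono' (integrable_const (C * Real.exp (β*t)))
      ((hmf.comp (measurable_const.sub measurable_id)).add
        (hmg.comp (measurable_const.sub measurable_id))).aestronglyMeasurable ?_
    filter_upwards [ae_restrict_mem measurableSet_Icc] with τ hτ
    rw [Real.norm_eq_abs, abs_of_nonneg (add_nonneg (hnnf _) (hnng _))]
    calc m_f (t - τ) + m_g (t - τ) ≤ C * Real.exp (β*(t-τ)) :=
          hgrow (t - τ) (by linarith [hτ.2])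
      _ ≤ C * Real.exp (β*t) := by
          apply mul_le_mul_of_nonneg_left _ hC
          exact Real.exp_le_exp.mpr (by nlinarith [hτ.1])
  have hGeq : LG = ENNReal.ofReal (qstar s) * Lsum := by
    have h1 : LG = ∫⁻ t in Ioi (0:ℝ), ENNReal.ofReal (Real.exp (-s*t)) *
        (∫⁻ τ in Icc 0 t, ENNReal.ofReal (m_f (t - τ) + m_g (t - τ)) ∂Q) := by
      rw [hLGdef]
      refine setLIntegral_congr_fun measurableSet_Ioi (fun t ht => ?_)
      rw [heqg t (le_of_lt ht), hinner Q t (le_of_lt ht)]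
    have h2 : ∫⁻ t in Ioi (0:ℝ), ENNReal.ofReal (Real.exp (-s*t)) *
          (∫⁻ τ in Icc 0 t, ENNReal.ofReal (m_f (t - τ) + m_g (t - τ)) ∂Q) =
        (∫⁻ τ, ENNReal.ofReal (Real.exp (-s*τ)) ∂Q) *
          ∫⁻ u in Ioi (0:ℝ), ENNReal.ofReal (Real.exp (-s*u)) * ENNReal.ofReal (m_f u + m_g u) :=
      conv_lap Q hQ (fun u => m_f u + m_g u) (hmf.add hmg) s
    rw [h1, h2, hqofReal]
  have hmeasSurv : Measurable fun t : ℝ => ENNReal.ofReal (Real.exp (-s*t)) * P (Ioi t) :=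
    hmeasEf.mul (Antitone.measurable fun a b hab => measure_mono (Ioi_subset_Ioi hab))
  have hFeq : LF = ENNReal.ofReal ((1 - pstar s)/s) + ENNReal.ofReal (pstar s) * Lsum := by
    have h1 : LF = ∫⁻ t in Ioi (0:ℝ), (ENNReal.ofReal (Real.exp (-s*t)) * P (Ioi t)
        + ENNReal.ofReal (Real.exp (-s*t)) *
          (∫⁻ τ in Icc 0 t, ENNReal.ofReal (m_f (t - τ) + m_g (t - τ)) ∂P)) := by
      rw [hLFdef]
      refine setLIntegral_congr_fun measurableSet_Ioi (fun t ht => ?_)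
      rw [heqf t (le_of_lt ht), ENNReal.ofReal_add ENNReal.toReal_nonneg
        (integral_nonneg fun τ => add_nonneg (hnnf _) (hnng _)),
        ENNReal.ofReal_toReal (measure_ne_top P _), hinner P t (le_of_lt ht), mul_add]
    have h2 : ∫⁻ t in Ioi (0:ℝ), ENNReal.ofReal (Real.exp (-s*t)) *
          (∫⁻ τ in Icc 0 t, ENNReal.ofReal (m_f (t - τ) + m_g (t - τ)) ∂P) =
        (∫⁻ τ, ENNReal.ofReal (Real.exp (-s*τ)) ∂P) *
          ∫⁻ u in Ioi (0:ℝ), ENNReal.ofReal (Real.exp (-s*u)) * ENNReal.ofReal (m_f u + m_g u) :=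
      conv_lap P hP (fun u => m_f u + m_g u) (hmf.add hmg) s
    have h3 := surv_lap P hP hs0
    rw [h1, lintegral_add_left hmeasSurv, h3, h2, hpofReal, ← hpstar s]
  -- real versions
  have hFint : (∫ t in Ioi (0:ℝ), Real.exp (-s * t) * m_f t) = LF.toReal := by
    rw [integral_eq_lintegral_of_nonneg_ae
      (ae_of_all _ fun t => mul_nonneg (Real.exp_nonneg _) (hnnf t))
      ((hexpm.mul hmf).aestronglyMeasurable)]
    congr 1
    rw [hLFdef]
    exact lintegral_congr fun t => ENNReal.ofReal_mul (Real.exp_nonneg _)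
  have hGint : (∫ t in Ioi (0:ℝ), Real.exp (-s * t) * m_g t) = LG.toReal := by
    rw [integral_eq_lintegral_of_nonneg_ae
      (ae_of_all _ fun t => mul_nonneg (Real.exp_nonneg _) (hnng t))
      ((hexpm.mul hmg).aestronglyMeasurable)]
    congr 1
    rw [hLGdef]
    exact lintegral_congr fun t => ENNReal.ofReal_mul (Real.exp_nonneg _)
  have hsum' : Lsum.toReal = LF.toReal + LG.toReal := by
    rw [hsum, ENNReal.toReal_add hLF_ne hLG_ne]
  have hGR : LG.toReal = qstar s * (LF.toReal + LG.toReal) := by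
    have h := congrArg ENNReal.toReal hGeq
    rwa [ENNReal.toReal_mul, ENNReal.toReal_ofReal hq0, hsum'] at h
  have hFR : LF.toReal = (1 - pstar s)/s + pstar s * (LF.toReal + LG.toReal) := by
    have h := congrArg ENNReal.toReal hFeq
    rwa [ENNReal.toReal_add ENNReal.ofReal_ne_top
      (ENNReal.mul_ne_top ENNReal.ofReal_ne_top hLsum_ne), ENNReal.toReal_mul,
      ENNReal.toReal_ofReal (div_nonneg (by linarith) hs0.le), ENNReal.toReal_ofReal hp0, hsum'] at h
  have hFRs : s * LF.toReal = (1 - pstar s) + s * (pstar s * (LF.toReal + LG.toReal)) := by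
    have h := congrArg (fun x : ℝ => s * x) hFR
    change s * LF.toReal = s * ((1 - pstar s)/s + pstar s * (LF.toReal + LG.toReal)) at h
    have h2 : s * ((1 - pstar s)/s) = 1 - pstar s := by field_simp
    rw [mul_add, h2] at h
    exact h
  have hψne : ψ s ≠ 0 := by
    intro h0
    have hpq : pstar s + qstar s = 1 := by have := hψ s; rw [h0] at this; linarith
    have hz : (1 - pstar s)/s = 0 := by
      linear_combination (-1 : ℝ) * hFR - hGR - (LF.toReal + LG.toReal) * hpq
    have hp1' : pstar s = 1 := by
      rcases div_eq_zero_iff.mp hz with h | h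
      · linarith
      · exact absurd h hs0.ne'
    have hz2 : ∫ τ, (1 - Real.exp (-s*τ)) ∂P = 0 := by
      rw [integral_sub (integrable_const 1) hintP]
      have he : ∫ τ, Real.exp (-s*τ) ∂P = pstar s := (hpstar s).symm
      rw [he, hp1']
      simp
    have hnn : 0 ≤ᵐ[P] fun τ => 1 - Real.exp (-s*τ) := by
      filter_upwards [haeP] with τ hτ
      have : Real.exp (-s*τ) ≤ 1 := Real.exp_le_one_iff.mpr (by nlinarith)
      simp only [Pi.zero_apply]
      linarith
    have hae0 := (integral_eq_zero_iff_of_nonneg_ae hnn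
      ((integrable_const 1).sub hintP)).mp hz2
    have hFalse : ∀ᵐ τ ∂P, False := by
      filter_upwards [haeP, hae0] with τ h1 h2
      simp only [Pi.zero_apply] at h2
      have h3 : Real.exp (-s*τ) < 1 := Real.exp_lt_one_iff.mpr (by nlinarith)
      linarith
    rw [ae_iff] at hFalse
    simpa [measure_univ] using hFalse
  have hne : s * ψ s ≠ 0 := mul_ne_zero hs0.ne' hψne
  constructor
  · rw [hFint, eq_div_iff hne, hψ s]
    linear_combination (1 - qstar s) * hFRs + pstar s * s * hGR
  · rw [hGint, eq_div_iff hne, hψ s]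
    linear_combination qstar s * hFRs + s * (1 - pstar s) * hGR
end

section
/- Define functions c_k, b_k : [0,∞) → [0,∞) recursively by c_1(t) = P((t,∞)), b_1(t) = Q((t,∞)), and for k ≥ 2, c_k(t) = ∫_{[0,t]} Σ_{j=1}^{k-1} c_j(t-τ) b_{k-j}(t-τ) dP(τ) and b_k(t) = ∫_{[0,t]} Σ_{j=1}^{k-1} c_j(t-τ) b_{k-j}(t-τ) dQ(τ). Then for every t ≥ 0, Σ_{k=1}^∞ c_k(t) = 1 and Σ_{k=1}^∞ b_k(t) = 1. (Thus for each t, (c_k(t))_{k≥1} and (b_k(t))_{k≥1} are the coefficient sequences of probability generating functions: the distributions of the total cell population at time t starting from a single mother cell, respectively a single daughter cell.) -/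
open MeasureTheory Set Filter
open scoped ENNReal Topology



/-- index set for the Cauchy-product partial sums -/
def AA (N : ℕ) : Finset (ℕ × ℕ) :=
  (Finset.range N ×ˢ Finset.range N).filter fun p => p.1 + p.2 < N

noncomputable def SS (c : ℕ → ℝ → ℝ≥0∞) (N : ℕ) (x : ℝ) : ℝ≥0∞ :=
  ∑ k ∈ Finset.range N, c (k + 1) (max x 0)

noncomputable def LL (c b : ℕ → ℝ → ℝ≥0∞) (N : ℕ) (y : ℝ) : ℝ≥0∞ :=
  ∑ p ∈ AA N, c (p.1 + 1) (max y 0) * b (p.2 + 1) (max y 0)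

noncomputable def FF (c b : ℕ → ℝ → ℝ≥0∞) (K : ℕ) (y : ℝ) : ℝ≥0∞ :=
  ∑ j ∈ Finset.Ico 1 K, c j (max y 0) * b (K - j) (max y 0)

noncomputable def ts (c : ℕ → ℝ → ℝ≥0∞) (x : ℝ) : ℝ≥0∞ := ∑' k, c (k + 1) (max x 0)

lemma aux_ident (f g : ℕ → ℝ≥0∞) (N : ℕ) :
    ∑ k ∈ Finset.range N, ∑ j ∈ Finset.Ico 1 (k + 2), f j * g (k + 2 - j)
      = ∑ p ∈ AA N, f (p.1 + 1) * g (p.2 + 1) := by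
  rw [Finset.sum_sigma']
  refine Finset.sum_nbij' (fun a => (a.2 - 1, a.1 + 1 - a.2)) (fun p => ⟨p.1 + p.2, p.1 + 1⟩)
    ?_ ?_ ?_ ?_ ?_
  · rintro ⟨k, j⟩ h
    simp only [Finset.mem_sigma, Finset.mem_range, Finset.mem_Ico] at h
    simp only [AA, Finset.mem_filter, Finset.mem_product, Finset.mem_range]
    omega
  · rintro ⟨i, l⟩ h
    simp only [AA, Finset.mem_filter, Finset.mem_product, Finset.mem_range] at h
    simp only [Finset.mem_sigma, Finset.mem_range, Finset.mem_Ico]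
    omega
  · rintro ⟨k, j⟩ h
    simp only [Finset.mem_sigma, Finset.mem_range, Finset.mem_Ico] at h
    simp only [Sigma.mk.inj_iff]
    constructor
    · omega
    · apply heq_of_eq; omega
  · rintro ⟨i, l⟩ h
    simp only [AA, Finset.mem_filter, Finset.mem_product, Finset.mem_range] at h
    simp only [Prod.mk.injEq]
    omega
  · rintro ⟨k, j⟩ h
    simp only [Finset.mem_sigma, Finset.mem_range, Finset.mem_Ico] at h
    have h1 : j - 1 + 1 = j := by omega
    have h2 : k + 1 - j + 1 = k + 2 - j := by omega
    rw [h1, h2]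

lemma sum_FF_eq (c b : ℕ → ℝ → ℝ≥0∞) (N : ℕ) (y : ℝ) :
    ∑ k ∈ Finset.range N, FF c b (k + 2) y = LL c b N y :=
  aux_ident (fun j => c j (max y 0)) (fun j => b j (max y 0)) N

lemma SS_mono (c : ℕ → ℝ → ℝ≥0∞) {N M : ℕ} (h : N ≤ M) (x : ℝ) : SS c N x ≤ SS c M x :=
  Finset.sum_le_sum_of_subset (Finset.range_subset_range.mpr h)

lemma SS_le_ts (c : ℕ → ℝ → ℝ≥0∞) (N : ℕ) (x : ℝ) : SS c N x ≤ ts c x :=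
  ENNReal.sum_le_tsum _

lemma ts_eq_iSup (c : ℕ → ℝ → ℝ≥0∞) (x : ℝ) : ts c x = ⨆ N, SS c N x :=
  ENNReal.tsum_eq_iSup_nat

lemma LL_le (c b : ℕ → ℝ → ℝ≥0∞) (N : ℕ) (y : ℝ) : LL c b N y ≤ SS c N y * SS b N y := by
  rw [SS, SS, Finset.sum_mul_sum, ← Finset.sum_product']
  exact Finset.sum_le_sum_of_subset (Finset.filter_subset _ _)

lemma LL_mono (c b : ℕ → ℝ → ℝ≥0∞) {N M : ℕ} (h : N ≤ M) (y : ℝ) :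
    LL c b N y ≤ LL c b M y := by
  apply Finset.sum_le_sum_of_subset
  intro p hp
  simp only [AA, Finset.mem_filter, Finset.mem_product, Finset.mem_range] at hp ⊢
  omega

lemma sup_LL (c b : ℕ → ℝ → ℝ≥0∞) (y : ℝ) : (⨆ N, LL c b N y) = ts c y * ts b y := by
  apply le_antisymm
  · exact iSup_le fun N => (LL_le c b N y).trans
      (mul_le_mul' (SS_le_ts c N y) (SS_le_ts b N y))
  · rw [ts_eq_iSup, ts_eq_iSup, ENNReal.iSup_mul]
    apply iSup_le; intro N
    rw [ENNReal.mul_iSup]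
    apply iSup_le; intro M
    calc SS c N y * SS b M y
        ≤ SS c (max N M) y * SS b (max N M) y :=
          mul_le_mul' (SS_mono c (le_max_left _ _) y) (SS_mono b (le_max_right _ _) y)
      _ ≤ LL c b (2 * max N M) y := by
          rw [SS, SS, Finset.sum_mul_sum, ← Finset.sum_product']
          apply Finset.sum_le_sum_of_subset
          intro p hp
          simp only [Finset.mem_product, Finset.mem_range] at hp
          simp only [AA, Finset.mem_filter, Finset.mem_product, Finset.mem_range]
          omega
      _ ≤ ⨆ K, LL c b K y := le_iSup (fun K => LL c b K y) (2 * max N M)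

lemma aux_sub_mul {a b : ℝ≥0∞} (ha : a ≤ 1) (hb : b ≤ 1) : 1 - a * b ≤ (1 - a) + (1 - b) := by
  rw [tsub_le_iff_right]
  calc (1:ℝ≥0∞) = (1 - a) + a := (tsub_add_cancel_of_le ha).symm
    _ ≤ (1 - a) + ((1 - b) + a * b) := by
        apply add_le_add_right
        calc a = a * ((1 - b) + b) := by rw [tsub_add_cancel_of_le hb, mul_one]
          _ = a * (1 - b) + a * b := mul_add _ _ _
          _ ≤ 1 * (1 - b) + a * b := add_le_add_left (mul_le_mul' ha le_rfl) _
          _ = (1 - b) + a * b := by rw [one_mul]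
    _ = (1 - a) + (1 - b) + a * b := (add_assoc _ _ _).symm

lemma aux_mass (P : Measure ℝ) [IsProbabilityMeasure P] (hP : P (Set.Iic 0) = 0)
    {t : ℝ} (ht : 0 ≤ t) : P (Set.Ioi t) + P (Set.Icc 0 t) = 1 := by
  have h1 : P (Set.Iic t) = P (Set.Icc 0 t) := by
    apply le_antisymm
    · have hsub : Set.Iic t ⊆ Set.Iio 0 ∪ Set.Icc 0 t := by
        intro x hx
        simp only [mem_Iic] at hx
        rcases lt_or_ge x 0 with h | h
        · exact Or.inl h
        · exact Or.inr ⟨h, hx⟩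
      calc P (Set.Iic t) ≤ P (Set.Iio 0 ∪ Set.Icc 0 t) := measure_mono hsub
        _ ≤ P (Set.Iio 0) + P (Set.Icc 0 t) := measure_union_le _ _
        _ = P (Set.Icc 0 t) := by
            rw [measure_mono_null Iio_subset_Iic_self hP, zero_add]
    · exact measure_mono fun x hx => hx.2
  have h2 := measure_add_measure_compl (μ := P) (measurableSet_Ioi (a := t))
  rw [compl_Ioi, h1] at h2
  simpa using h2



lemma lint_congr_nonneg (ν : Measure ℝ) {s : ℝ} (f g : ℝ → ℝ≥0∞)
    (h : ∀ y, 0 ≤ y → f y = g y) :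
    ∫⁻ τ in Set.Icc 0 s, f (s - τ) ∂ν = ∫⁻ τ in Set.Icc 0 s, g (s - τ) ∂ν := by
  rw [← lintegral_indicator measurableSet_Icc, ← lintegral_indicator measurableSet_Icc]
  congr 1
  exact Set.indicator_congr fun τ hτ => h _ (by simp only [mem_Icc] at hτ; linarith [hτ.1, hτ.2])

lemma meas_helper (ν : Measure ℝ) [SFinite ν] {F : ℝ → ℝ≥0∞} (hF : Measurable F) :
    Measurable fun x : ℝ => ∫⁻ τ in Set.Icc 0 (max x 0), F (max x 0 - τ) ∂ν := by
  have heq : (fun x : ℝ => ∫⁻ τ in Set.Icc 0 (max x 0), F (max x 0 - τ) ∂ν)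
      = fun x : ℝ => ∫⁻ τ, ({q : ℝ × ℝ | 0 ≤ q.2 ∧ q.2 ≤ max q.1 0}.indicator
          (fun q => F (max q.1 0 - q.2))) (x, τ) ∂ν := by
    funext x
    rw [← lintegral_indicator measurableSet_Icc]
    apply lintegral_congr
    intro τ
    by_cases h : 0 ≤ τ ∧ τ ≤ max x 0
    · rw [Set.indicator_of_mem (mem_Icc.mpr h), Set.indicator_of_mem (by exact h)]
    · rw [Set.indicator_of_notMem (fun hm => h (mem_Icc.mp hm)),
        Set.indicator_of_notMem (by exact h)]
  rw [heq]
  apply Measurable.lintegral_prod_right'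
  apply Measurable.indicator
  · exact hF.comp ((measurable_fst.max measurable_const).sub measurable_snd)
  · have : {q : ℝ × ℝ | 0 ≤ q.2 ∧ q.2 ≤ max q.1 0}
        = {q : ℝ × ℝ | 0 ≤ q.2} ∩ {q : ℝ × ℝ | q.2 ≤ max q.1 0} := rfl
    rw [this]
    exact (measurableSet_le measurable_const measurable_snd).inter
      (measurableSet_le measurable_snd (measurable_fst.max measurable_const))

lemma meas_all (P Q : Measure ℝ) [IsProbabilityMeasure P] [IsProbabilityMeasure Q]
    (c b : ℕ → ℝ → ℝ≥0∞)
    (hc1 : ∀ t ≥ (0:ℝ), c 1 t = P (Set.Ioi t))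
    (hb1 : ∀ t ≥ (0:ℝ), b 1 t = Q (Set.Ioi t))
    (hck : ∀ k : ℕ, 2 ≤ k → ∀ t ≥ (0:ℝ), c k t =
      ∫⁻ τ in Set.Icc 0 t, (∑ j ∈ Finset.Ico 1 k, c j (t - τ) * b (k - j) (t - τ)) ∂P)
    (hbk : ∀ k : ℕ, 2 ≤ k → ∀ t ≥ (0:ℝ), b k t =
      ∫⁻ τ in Set.Icc 0 t, (∑ j ∈ Finset.Ico 1 k, c j (t - τ) * b (k - j) (t - τ)) ∂Q) :
    ∀ k, 1 ≤ k → Measurable (fun x : ℝ => c k (max x 0)) ∧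
      Measurable (fun x : ℝ => b k (max x 0)) := by
  intro k
  induction k using Nat.strong_induction_on with
  | _ k ih =>
    intro hk
    match k, hk with
    | 1, _ =>
      constructor
      · have h : (fun x : ℝ => c 1 (max x 0)) = fun x : ℝ => P (Set.Ioi (max x 0)) :=
          funext fun x => hc1 _ (le_max_right _ _)
        rw [h]
        exact Antitone.measurable fun x y hxy =>
          measure_mono (Ioi_subset_Ioi (max_le_max hxy le_rfl))
      · have h : (fun x : ℝ => b 1 (max x 0)) = fun x : ℝ => Q (Set.Ioi (max x 0)) :=
          funext fun x => hb1 _ (le_max_right _ _)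
        rw [h]
        exact Antitone.measurable fun x y hxy =>
          measure_mono (Ioi_subset_Ioi (max_le_max hxy le_rfl))
    | (m + 2), _ =>
      have hF : Measurable (FF c b (m + 2)) := by
        apply Finset.measurable_sum
        intro j hj
        simp only [Finset.mem_Ico] at hj
        exact ((ih j (by omega) (by omega)).1).mul ((ih (m + 2 - j) (by omega) (by omega)).2)
      constructor
      · have key : (fun x : ℝ => c (m + 2) (max x 0))
            = fun x : ℝ => ∫⁻ τ in Set.Icc 0 (max x 0), FF c b (m + 2) (max x 0 - τ) ∂P := by
          funext x
          rw [hck (m + 2) (by omega) _ (le_max_right _ _)]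
          exact lint_congr_nonneg P
            (fun y => ∑ j ∈ Finset.Ico 1 (m + 2), c j y * b (m + 2 - j) y)
            (FF c b (m + 2)) (fun y hy => by simp only [FF]; rw [max_eq_left hy])
        rw [key]
        exact meas_helper P hF
      · have key : (fun x : ℝ => b (m + 2) (max x 0))
            = fun x : ℝ => ∫⁻ τ in Set.Icc 0 (max x 0), FF c b (m + 2) (max x 0 - τ) ∂Q := by
          funext x
          rw [hbk (m + 2) (by omega) _ (le_max_right _ _)]
          exact lint_congr_nonneg Q
            (fun y => ∑ j ∈ Finset.Ico 1 (m + 2), c j y * b (m + 2 - j) y)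
            (FF c b (m + 2)) (fun y hy => by simp only [FF]; rw [max_eq_left hy])
        rw [key]
        exact meas_helper Q hF




lemma FF_meas {c b : ℕ → ℝ → ℝ≥0∞}
    (hmeas : ∀ k, 1 ≤ k → Measurable (fun x : ℝ => c k (max x 0)) ∧
      Measurable (fun x : ℝ => b k (max x 0))) (K : ℕ) (hK : 2 ≤ K) :
    Measurable (FF c b K) := by
  apply Finset.measurable_sum
  intro j hj
  simp only [Finset.mem_Ico] at hj
  exact ((hmeas j (by omega)).1).mul ((hmeas (K - j) (by omega)).2)

lemma LL_meas {c b : ℕ → ℝ → ℝ≥0∞}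
    (hmeas : ∀ k, 1 ≤ k → Measurable (fun x : ℝ => c k (max x 0)) ∧
      Measurable (fun x : ℝ => b k (max x 0))) (N : ℕ) :
    Measurable (LL c b N) := by
  apply Finset.measurable_sum
  intro p _
  exact ((hmeas (p.1 + 1) (by omega)).1).mul ((hmeas (p.2 + 1) (by omega)).2)

lemma step_gen (ν : Measure ℝ) (c b a : ℕ → ℝ → ℝ≥0∞)
    (hak : ∀ k : ℕ, 2 ≤ k → ∀ t ≥ (0:ℝ), a k t =
      ∫⁻ τ in Set.Icc 0 t, (∑ j ∈ Finset.Ico 1 k, c j (t - τ) * b (k - j) (t - τ)) ∂ν)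
    (hmeas : ∀ k, 1 ≤ k → Measurable (fun x : ℝ => c k (max x 0)) ∧
      Measurable (fun x : ℝ => b k (max x 0)))
    (N : ℕ) (t : ℝ) (ht : 0 ≤ t) :
    ∑ k ∈ Finset.range (N + 1), a (k + 1) t
      = a 1 t + ∫⁻ τ in Set.Icc 0 t, LL c b N (t - τ) ∂ν := by
  rw [Finset.sum_range_succ', add_comm]
  congr 1
  have hterm : ∀ k : ℕ, a (k + 1 + 1) t = ∫⁻ τ in Set.Icc 0 t, FF c b (k + 2) (t - τ) ∂ν := by
    intro k
    rw [hak (k + 2) (by omega) t ht]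
    exact lint_congr_nonneg ν
      (fun y => ∑ j ∈ Finset.Ico 1 (k + 2), c j y * b (k + 2 - j) y)
      (FF c b (k + 2)) (fun y hy => by simp only [FF]; rw [max_eq_left hy])
  calc ∑ k ∈ Finset.range N, a (k + 1 + 1) t
      = ∑ k ∈ Finset.range N, ∫⁻ τ in Set.Icc 0 t, FF c b (k + 2) (t - τ) ∂ν :=
        Finset.sum_congr rfl fun k _ => hterm k
    _ = ∫⁻ τ in Set.Icc 0 t, ∑ k ∈ Finset.range N, FF c b (k + 2) (t - τ) ∂ν :=
        (lintegral_finset_sum _ fun k _ =>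
          (FF_meas hmeas (k + 2) (by omega)).comp (measurable_const.sub measurable_id)).symm
    _ = ∫⁻ τ in Set.Icc 0 t, LL c b N (t - τ) ∂ν := by
        apply lintegral_congr
        intro τ
        exact sum_FF_eq c b N (t - τ)

lemma hfun_gen (ν : Measure ℝ) [IsProbabilityMeasure ν] (hν : ν (Set.Iic 0) = 0)
    (c b a : ℕ → ℝ → ℝ≥0∞)
    (ha1 : ∀ t ≥ (0:ℝ), a 1 t = ν (Set.Ioi t))
    (hak : ∀ k : ℕ, 2 ≤ k → ∀ t ≥ (0:ℝ), a k t =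
      ∫⁻ τ in Set.Icc 0 t, (∑ j ∈ Finset.Ico 1 k, c j (t - τ) * b (k - j) (t - τ)) ∂ν)
    (hmeas : ∀ k, 1 ≤ k → Measurable (fun x : ℝ => c k (max x 0)) ∧
      Measurable (fun x : ℝ => b k (max x 0)))
    (hLL1 : ∀ N y, LL c b N y ≤ 1)
    (t : ℝ) (ht : 0 ≤ t) :
    1 - ts a t ≤ ∫⁻ τ in Set.Icc 0 t, (1 - ts c (t - τ) * ts b (t - τ)) ∂ν := by
  have hmass := aux_mass ν hν ht
  have hLmeas : ∀ N, Measurable fun τ : ℝ => LL c b N (t - τ) := fun N =>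
    (LL_meas hmeas N).comp (measurable_const.sub measurable_id)
  have key : ∀ N, 1 - ts a t ≤ ∫⁻ τ in Set.Icc 0 t, (1 - LL c b N (t - τ)) ∂ν := by
    intro N
    have hSSa : SS a (N + 1) t = a 1 t + ∫⁻ τ in Set.Icc 0 t, LL c b N (t - τ) ∂ν := by
      have h0 : SS a (N + 1) t = ∑ k ∈ Finset.range (N + 1), a (k + 1) t := by
        simp only [SS, max_eq_left ht]
      rw [h0]
      exact step_gen ν c b a hak hmeas N t ht
    refine le_trans (tsub_le_tsub_left (SS_le_ts a (N + 1) t) 1) ?_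
    rw [tsub_le_iff_right, hSSa]
    apply le_of_eq
    have hmeasg : Measurable fun τ : ℝ => (1:ℝ≥0∞) - LL c b N (t - τ) :=
      measurable_const.sub (hLmeas N)
    calc (1:ℝ≥0∞) = ν (Set.Icc 0 t) + ν (Set.Ioi t) := by rw [add_comm]; exact hmass.symm
      _ = (∫⁻ τ in Set.Icc 0 t, 1 ∂ν) + ν (Set.Ioi t) := by rw [setLIntegral_const, one_mul]
      _ = (∫⁻ τ in Set.Icc 0 t, ((1 - LL c b N (t - τ)) + LL c b N (t - τ)) ∂ν) + ν (Set.Ioi t) := by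
          congr 1
          apply lintegral_congr
          intro τ
          rw [tsub_add_cancel_of_le (hLL1 N _)]
      _ = ((∫⁻ τ in Set.Icc 0 t, (1 - LL c b N (t - τ)) ∂ν)
            + ∫⁻ τ in Set.Icc 0 t, LL c b N (t - τ) ∂ν) + ν (Set.Ioi t) := by
          rw [lintegral_add_left hmeasg]
      _ = (∫⁻ τ in Set.Icc 0 t, (1 - LL c b N (t - τ)) ∂ν)
            + (a 1 t + ∫⁻ τ in Set.Icc 0 t, LL c b N (t - τ) ∂ν) := by
          rw [ha1 t ht]; ring
  have hanti : Antitone fun N : ℕ => fun τ : ℝ => (1:ℝ≥0∞) - LL c b N (t - τ) :=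
    fun N M h τ => tsub_le_tsub_left (LL_mono c b h _) 1
  have hfin : (∫⁻ τ in Set.Icc 0 t, ((fun N : ℕ => fun τ : ℝ => (1:ℝ≥0∞) - LL c b N (t - τ)) 0) τ ∂ν) ≠ ⊤ := by
    apply ne_of_lt
    calc (∫⁻ τ in Set.Icc 0 t, ((1:ℝ≥0∞) - LL c b 0 (t - τ)) ∂ν)
        ≤ ∫⁻ _ in Set.Icc 0 t, (1:ℝ≥0∞) ∂ν := lintegral_mono fun τ => tsub_le_self
      _ = ν (Set.Icc 0 t) := by rw [setLIntegral_const, one_mul]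
      _ < ⊤ := measure_lt_top ν _
  have hswap := lintegral_iInf (μ := ν.restrict (Set.Icc 0 t))
    (f := fun N : ℕ => fun τ : ℝ => (1:ℝ≥0∞) - LL c b N (t - τ))
    (fun N => measurable_const.sub (hLmeas N)) hanti hfin
  calc 1 - ts a t ≤ ⨅ N, ∫⁻ τ in Set.Icc 0 t, (1 - LL c b N (t - τ)) ∂ν := le_iInf key
    _ = ∫⁻ τ in Set.Icc 0 t, ⨅ N, (1 - LL c b N (t - τ)) ∂ν := hswap.symm
    _ = ∫⁻ τ in Set.Icc 0 t, (1 - ts c (t - τ) * ts b (t - τ)) ∂ν := by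
        apply lintegral_congr
        intro τ
        rw [← sup_LL, ENNReal.sub_iSup (by simp : (1:ℝ≥0∞) ≠ ⊤)]




/-- Define `c_k, b_k : [0,∞) → [0,∞)` recursively by
`c_1(t) = P((t,∞))`, `b_1(t) = Q((t,∞))`, and for `k ≥ 2`,
`c_k(t) = ∫_{[0,t]} Σ_{j=1}^{k-1} c_j(t-τ) b_{k-j}(t-τ) dP(τ)`,
`b_k(t) = ∫_{[0,t]} Σ_{j=1}^{k-1} c_j(t-τ) b_{k-j}(t-τ) dQ(τ)`.
Then for every `t ≥ 0`, `Σ_{k=1}^∞ c_k(t) = 1` and `Σ_{k=1}^∞ b_k(t) = 1`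
(so these are the coefficient sequences of probability generating functions). -/
theorem stmt9
    (P Q : Measure ℝ) [IsProbabilityMeasure P] [IsProbabilityMeasure Q]
    (hP : P (Set.Iic 0) = 0) (hQ : Q (Set.Iic 0) = 0)
    (c b : ℕ → ℝ → ℝ≥0∞)
    (hc1 : ∀ t ≥ (0:ℝ), c 1 t = P (Set.Ioi t))
    (hb1 : ∀ t ≥ (0:ℝ), b 1 t = Q (Set.Ioi t))
    (hck : ∀ k : ℕ, 2 ≤ k → ∀ t ≥ (0:ℝ), c k t =
      ∫⁻ τ in Set.Icc 0 t, (∑ j ∈ Finset.Ico 1 k, c j (t - τ) * b (k - j) (t - τ)) ∂P)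
    (hbk : ∀ k : ℕ, 2 ≤ k → ∀ t ≥ (0:ℝ), b k t =
      ∫⁻ τ in Set.Icc 0 t, (∑ j ∈ Finset.Ico 1 k, c j (t - τ) * b (k - j) (t - τ)) ∂Q) :
    ∀ t ≥ (0:ℝ), (∑' k : ℕ, c (k + 1) t) = 1 ∧ (∑' k : ℕ, b (k + 1) t) = 1 := by
  have hmeas := meas_all P Q c b hc1 hb1 hck hbk
  -- partial sums are at most 1
  have hbound : ∀ N : ℕ, ∀ x : ℝ, SS c N x ≤ 1 ∧ SS b N x ≤ 1 := by
    intro N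
    induction N with
    | zero => intro x; simp [SS]
    | succ N ihN =>
      have hLL1 : ∀ y, LL c b N y ≤ 1 := fun y =>
        (LL_le c b N y).trans (mul_le_one' (ihN y).1 (ihN y).2)
      intro x
      set s : ℝ := max x 0 with hs
      have hs0 : (0:ℝ) ≤ s := le_max_right _ _
      constructor
      · have h0 : SS c (N + 1) x = ∑ k ∈ Finset.range (N + 1), c (k + 1) s := by
          simp only [SS, hs]
        rw [h0, step_gen P c b c hck hmeas N s hs0, hc1 s hs0]
        calc P (Set.Ioi s) + ∫⁻ τ in Set.Icc 0 s, LL c b N (s - τ) ∂P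
            ≤ P (Set.Ioi s) + ∫⁻ _ in Set.Icc 0 s, (1:ℝ≥0∞) ∂P :=
              add_le_add_right (lintegral_mono fun τ => hLL1 _) _
          _ = P (Set.Ioi s) + P (Set.Icc 0 s) := by rw [setLIntegral_const, one_mul]
          _ = 1 := aux_mass P hP hs0
      · have h0 : SS b (N + 1) x = ∑ k ∈ Finset.range (N + 1), b (k + 1) s := by
          simp only [SS, hs]
        rw [h0, step_gen Q c b b hbk hmeas N s hs0, hb1 s hs0]
        calc Q (Set.Ioi s) + ∫⁻ τ in Set.Icc 0 s, LL c b N (s - τ) ∂Q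
            ≤ Q (Set.Ioi s) + ∫⁻ _ in Set.Icc 0 s, (1:ℝ≥0∞) ∂Q :=
              add_le_add_right (lintegral_mono fun τ => hLL1 _) _
          _ = Q (Set.Ioi s) + Q (Set.Icc 0 s) := by rw [setLIntegral_const, one_mul]
          _ = 1 := aux_mass Q hQ hs0
  have htsc1 : ∀ x, ts c x ≤ 1 := fun x => by
    rw [ts_eq_iSup]; exact iSup_le fun N => (hbound N x).1
  have htsb1 : ∀ x, ts b x ≤ 1 := fun x => by
    rw [ts_eq_iSup]; exact iSup_le fun N => (hbound N x).2
  have hLL1 : ∀ N y, LL c b N y ≤ 1 := fun N y =>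
    (LL_le c b N y).trans (mul_le_one' (hbound N y).1 (hbound N y).2)
  -- the key recursive inequality for w
  set w : ℝ → ℝ≥0∞ := fun y => (1 - ts c y) + (1 - ts b y) with hw
  have hw2 : ∀ y, w y ≤ 2 := by
    intro y
    have : (2:ℝ≥0∞) = 1 + 1 := by norm_num
    rw [hw, this]
    exact add_le_add tsub_le_self tsub_le_self
  have hkey : ∀ t : ℝ, 0 ≤ t → w t ≤ ∫⁻ τ in Set.Icc 0 t, w (t - τ) ∂(P + Q) := by
    intro t ht
    have hptw : ∀ y : ℝ, (1 - ts c y * ts b y) ≤ w y := fun y =>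
      aux_sub_mul (htsc1 y) (htsb1 y)
    calc w t ≤ (∫⁻ τ in Set.Icc 0 t, (1 - ts c (t - τ) * ts b (t - τ)) ∂P)
          + ∫⁻ τ in Set.Icc 0 t, (1 - ts c (t - τ) * ts b (t - τ)) ∂Q :=
        add_le_add (hfun_gen P hP c b c hc1 hck hmeas hLL1 t ht)
          (hfun_gen Q hQ c b b hb1 hbk hmeas hLL1 t ht)
      _ ≤ (∫⁻ τ in Set.Icc 0 t, w (t - τ) ∂P) + ∫⁻ τ in Set.Icc 0 t, w (t - τ) ∂Q :=
        add_le_add (lintegral_mono fun τ => hptw _) (lintegral_mono fun τ => hptw _)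
      _ = ∫⁻ τ in Set.Icc 0 t, w (t - τ) ∂(P + Q) := by
        rw [Measure.restrict_add, lintegral_add_measure]
  -- choose ε with small mass near 0
  have hμ0 : (P + Q) (Set.Iic 0) = 0 := by
    simp [Measure.add_apply, hP, hQ]
  obtain ⟨ε, hε, hδlt⟩ : ∃ ε : ℝ, 0 < ε ∧ (P + Q) (Set.Iic ε) < 1 := by
    have hanti : Antitone fun n : ℕ => Set.Iic ((1:ℝ) / (n + 1)) := by
      intro n m hnm
      apply Iic_subset_Iic.mpr
      apply one_div_le_one_div_of_le
      · positivity
      · have hc : (n:ℝ) ≤ m := Nat.cast_le.mpr hnm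
        push_cast
        linarith
    have hiInter : (⋂ n : ℕ, Set.Iic ((1:ℝ) / (n + 1))) = Set.Iic 0 := by
      ext x
      simp only [mem_iInter, mem_Iic]
      constructor
      · intro h
        by_contra hx
        push_neg at hx
        obtain ⟨n, hn⟩ := exists_nat_one_div_lt hx
        exact absurd (h n) (not_le.mpr hn)
      · intro h n
        have : (0:ℝ) < 1 / (n + 1) := by positivity
        linarith
    have htend := tendsto_measure_iInter_atTop (μ := P + Q)
      (s := fun n : ℕ => Set.Iic ((1:ℝ) / (n + 1)))
      (fun n => measurableSet_Iic.nullMeasurableSet) hanti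
      ⟨0, measure_ne_top _ _⟩
    rw [hiInter, hμ0] at htend
    have hev : ∀ᶠ n : ℕ in atTop, ((P + Q) ∘ fun n : ℕ => Set.Iic ((1:ℝ) / (n + 1))) n < 1 :=
      htend.eventually_lt_const (by norm_num)
    obtain ⟨n, hn⟩ := hev.exists
    exact ⟨1 / (n + 1), by positivity, hn⟩
  set δ : ℝ≥0∞ := (P + Q) (Set.Iic ε) with hδ
  -- w vanishes on [0, n ε] for every n
  have hzero : ∀ n : ℕ, ∀ t : ℝ, 0 ≤ t → t ≤ n * ε → w t = 0 := by
    intro n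
    induction n with
    | zero =>
      intro t ht ht'
      have ht0 : t = 0 := le_antisymm (by simpa using ht') ht
      subst ht0
      have h0 : (P + Q).restrict (Set.Icc (0:ℝ) 0) = 0 := by
        rw [Measure.restrict_eq_zero]
        exact measure_mono_null (by rw [Set.Icc_self]; exact singleton_subset_iff.mpr self_mem_Iic) hμ0
      have h1 := hkey 0 le_rfl
      rw [show (∫⁻ τ in Set.Icc (0:ℝ) 0, w (0 - τ) ∂(P + Q))
          = ∫⁻ τ, w (0 - τ) ∂((P + Q).restrict (Set.Icc (0:ℝ) 0)) from rfl, h0,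
        lintegral_zero_measure] at h1
      exact le_antisymm h1 (zero_le)
    | succ n ihn =>
      have inner : ∀ m : ℕ, ∀ t : ℝ, 0 ≤ t → t ≤ (n + 1 : ℕ) * ε → w t ≤ 2 * δ ^ m := by
        intro m
        induction m with
        | zero => intro t _ _; simpa using hw2 t
        | succ m ihm =>
          intro t ht ht'
          rcases le_or_gt t (n * ε) with h | h
          · rw [ihn t ht h]; exact zero_le
          · calc w t ≤ ∫⁻ τ in Set.Icc 0 t, w (t - τ) ∂(P + Q) := hkey t ht
              _ ≤ ∫⁻ τ in Set.Icc 0 t,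
                    (Set.Iio (t - n * ε)).indicator (fun _ => 2 * δ ^ m) τ ∂(P + Q) := by
                  apply lintegral_mono_ae
                  filter_upwards [ae_restrict_mem measurableSet_Icc] with τ hτ
                  rcases lt_or_ge τ (t - n * ε) with hτ' | hτ'
                  · rw [Set.indicator_of_mem (show τ ∈ Set.Iio (t - (n:ℝ) * ε) from hτ')]
                    apply ihm (t - τ) (by linarith [hτ.2])
                    push_cast
                    push_cast at ht'
                    linarith [hτ.1]
                  · rw [ihn (t - τ) (by linarith [hτ.2]) (by linarith)]
                    exact zero_le
              _ = 2 * δ ^ m * ((P + Q).restrict (Set.Icc 0 t)) (Set.Iio (t - n * ε)) := by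
                  rw [lintegral_indicator measurableSet_Iio, setLIntegral_const]
              _ ≤ 2 * δ ^ m * δ := by
                  apply mul_le_mul_right
                  rw [Measure.restrict_apply measurableSet_Iio, hδ]
                  apply measure_mono
                  intro τ hτ
                  obtain ⟨hτ1, hτ2⟩ := hτ
                  simp only [mem_Iio] at hτ1
                  simp only [mem_Iic]
                  push_cast at ht'
                  linarith
              _ = 2 * δ ^ (m + 1) := by rw [pow_succ, mul_assoc]
      intro t ht ht'
      have hlim : Tendsto (fun m : ℕ => 2 * δ ^ m) atTop (𝓝 0) := by
        have h2 := ENNReal.tendsto_pow_atTop_nhds_zero_of_lt_one hδlt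
        have := ENNReal.Tendsto.const_mul h2 (Or.inr (by norm_num : (2:ℝ≥0∞) ≠ ⊤))
        simpa using this
      have : w t ≤ 0 := ge_of_tendsto hlim (Eventually.of_forall fun m => inner m t ht ht')
      exact le_antisymm this (zero_le)
  -- conclude
  intro t ht
  obtain ⟨n, hn⟩ := exists_nat_ge (t / ε)
  have htn : t ≤ n * ε := by
    rw [div_le_iff₀ hε] at hn
    linarith
  have hwt := hzero n t ht htn
  have hts_one : ∀ (f : ℕ → ℝ → ℝ≥0∞), ts f t ≤ 1 → (1 - ts f t) ≤ w t →
      (∑' k : ℕ, f (k + 1) t) = 1 := by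
    intro f hle hsub
    have h0 : 1 - ts f t = 0 := le_antisymm (hwt ▸ hsub) (zero_le)
    have h1 : ts f t = 1 := le_antisymm hle (tsub_eq_zero_iff_le.mp h0)
    rw [ts, max_eq_left ht] at h1
    exact h1
  exact ⟨hts_one c (htsc1 t) (le_add_right le_rfl),
    hts_one b (htsb1 t) (le_add_left le_rfl)⟩
end

section
/- Suppose c_k, b_k : [0,∞) → [0,∞) are measurable functions with Σ_{k=1}^∞ c_k(t) ≤ 1 and Σ_{k=1}^∞ b_k(t) ≤ 1 for all t ≥ 0, and suppose that the functions f(t,x) = Σ_{k=1}^∞ c_k(t) x^k and g(t,x) = Σ_{k=1}^∞ b_k(t) x^k satisfy, for all t ≥ 0 and all x ∈ (0,1), the integral equations f(t,x) = x·P((t,∞)) + ∫_{[0,t]} f(t-τ,x) g(t-τ,x) dP(τ) and g(t,x) = x·Q((t,∞)) + ∫_{[0,t]} f(t-τ,x) g(t-τ,x) dQ(τ). Then c_1(t) = P((t,∞)), b_1(t) = Q((t,∞)), and for every k ≥ 2 and t ≥ 0: c_k(t) = ∫_{[0,t]} Σ_{j=1}^{k-1} c_j(t-τ) b_{k-j}(t-τ)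 dP(τ) and b_k(t) = ∫_{[0,t]} Σ_{j=1}^{k-1} c_j(t-τ) b_{k-j}(t-τ) dQ(τ). -/
open MeasureTheory Set Filter

open scoped ENNReal NNReal

lemma coeff_zero (γ : ℕ → ℝ) (hb : ∀ k, |γ k| ≤ 2)
    (h : ∀ x ∈ Set.Ioo (0:ℝ) 1, ∑' k, γ k * x ^ k = 0) : ∀ k, γ k = 0 := by
  intro n
  induction n using Nat.strong_induction_on with
  | _ n ih =>
    have key : ∀ x ∈ Set.Ioo (0:ℝ) (1/2), |γ n| ≤ 4 * x := by
      intro x ⟨hx0, hx2⟩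
      have hx1 : x < 1 := by linarith
      have hgeo : Summable (fun k : ℕ => 2 * x ^ k) :=
        (summable_geometric_of_lt_one hx0.le hx1).mul_left 2
      have hs : Summable (fun k : ℕ => γ k * x ^ k) := by
        refine Summable.of_norm (hgeo.of_nonneg_of_le (fun k => norm_nonneg _) ?_)
        intro k
        rw [Real.norm_eq_abs, abs_mul, abs_pow, abs_of_nonneg hx0.le]
        exact mul_le_mul_of_nonneg_right (hb k) (pow_nonneg hx0.le k)
      have hsplit := Summable.sum_add_tsum_nat_add n hs
      have hfin : ∑ i ∈ Finset.range n, γ i * x ^ i = 0 :=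
        Finset.sum_eq_zero fun i hi => by rw [ih i (Finset.mem_range.mp hi), zero_mul]
      rw [h x ⟨hx0, hx1⟩, hfin, zero_add] at hsplit
      -- hsplit : ∑' i, γ (i+n) * x^(i+n) = 0
      have hxn : (0:ℝ) < x ^ n := pow_pos hx0 n
      have hshift : ∀ i : ℕ, γ (i + n) * x ^ (i + n) = (γ (i + n) * x ^ i) * x ^ n := by
        intro i; rw [pow_add]; ring
      rw [tsum_congr hshift, tsum_mul_right] at hsplit
      have hS : ∑' i : ℕ, γ (i + n) * x ^ i = 0 := by
        rcases mul_eq_zero.mp hsplit with h' | h'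
        · exact h'
        · exact absurd h' hxn.ne'
      have hs2 : Summable (fun i : ℕ => γ (i + n) * x ^ i) := by
        refine Summable.of_norm (hgeo.of_nonneg_of_le (fun k => norm_nonneg _) ?_)
        intro k
        rw [Real.norm_eq_abs, abs_mul, abs_pow, abs_of_nonneg hx0.le]
        exact mul_le_mul_of_nonneg_right (hb _) (pow_nonneg hx0.le k)
      have h0 := Summable.tsum_eq_zero_add hs2
      rw [hS] at h0
      simp only [pow_zero, mul_one, Nat.zero_add] at h0
      -- h0 : 0 = γ n + ∑' i, γ (i+1+n) * x^(i+1)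
      have hbound : |∑' i : ℕ, γ (i + 1 + n) * x ^ (i + 1)| ≤ 4 * x := by
        have hsum2 : Summable (fun i : ℕ => 2 * x * x ^ i) :=
          (summable_geometric_of_lt_one hx0.le hx1).mul_left _
        have hle : ∀ i : ℕ, |γ (i + 1 + n) * x ^ (i + 1)| ≤ 2 * x * x ^ i := ?_
        have habs : Summable (fun i : ℕ => |γ (i + 1 + n) * x ^ (i + 1)|) :=
          hsum2.of_nonneg_of_le (fun i => abs_nonneg _) hle
        have hnorm := norm_tsum_le_tsum_norm (f := fun i : ℕ => γ (i + 1 + n) * x ^ (i + 1)) habs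
        have := Summable.tsum_le_tsum hle habs hsum2
        · refine hnorm.trans (this.trans ?_)
          rw [tsum_mul_left, tsum_geometric_of_lt_one hx0.le hx1]
          have h12 : (1 - x)⁻¹ ≤ 2 := by
            rw [inv_le_comm₀ (by linarith) (by norm_num)]
            linarith
          calc 2 * x * (1-x)⁻¹ ≤ 2 * x * 2 := by
                exact mul_le_mul_of_nonneg_left h12 (by positivity)
            _ = 4 * x := by ring
        · intro i
          rw [abs_mul, abs_pow, abs_of_nonneg hx0.le, pow_succ]
          calc |γ (i+1+n)| * (x ^ i * x) ≤ 2 * (x ^ i * x) :=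
                mul_le_mul_of_nonneg_right (hb _) (by positivity)
            _ = 2 * x * x ^ i := by ring
      have : γ n = -∑' i : ℕ, γ (i + 1 + n) * x ^ (i + 1) := by linarith
      rw [this, abs_neg]
      exact hbound
    by_contra hne
    have hpos : 0 < |γ n| := abs_pos.mpr hne
    set x := min (|γ n| / 8) (1/4) with hxdef
    have hx : x ∈ Set.Ioo (0:ℝ) (1/2) := by
      constructor
      · exact lt_min (by positivity) (by norm_num)
      · exact lt_of_le_of_lt (min_le_right _ _) (by norm_num)
    have := key x hx
    have : |γ n| ≤ 4 * (|γ n| / 8) :=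
      this.trans (by nlinarith [min_le_left (|γ n| / 8) (1/4 : ℝ)])
    linarith

lemma summable_aux {x : ℝ} (hx0 : 0 < x) (hx1 : x < 1) (α : ℕ → ℝ)
    (h : ∀ k, |α k| ≤ 1) (m : ℕ) : Summable (fun k : ℕ => α k * x ^ (k + m)) := by
  have hgeo : Summable (fun k : ℕ => x ^ k * x ^ m) :=
    (summable_geometric_of_lt_one hx0.le hx1).mul_right _
  refine Summable.of_norm (hgeo.of_nonneg_of_le (fun k => norm_nonneg _) ?_)
  intro k
  rw [Real.norm_eq_abs, abs_mul, abs_pow, abs_of_nonneg hx0.le, ← pow_add]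
  exact mul_le_mul_of_nonneg_right (h k) (pow_nonneg hx0.le _) |>.trans (by rw [one_mul])

lemma cauchy_step (c b : ℕ → ℝ → ℝ) (s : ℝ)
    (hc1 : ∀ k, |c (k+1) s| ≤ 1) (hb1 : ∀ k, |b (k+1) s| ≤ 1)
    {x : ℝ} (hx0 : 0 < x) (hx1 : x < 1) :
    (∑' k : ℕ, c (k+1) s * x ^ (k+1)) * (∑' k : ℕ, b (k+1) s * x ^ (k+1)) =
      ∑' n : ℕ, (∑ j ∈ Finset.range (n+1), c (j+1) s * b (n-j+1) s) * x ^ (n+2) := by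
  have hcn : Summable fun k : ℕ => ‖c (k+1) s * x ^ (k+1)‖ :=
    ((summable_aux hx0 hx1 (fun k => c (k+1) s) hc1 1).abs).congr
      (fun k => by rw [Real.norm_eq_abs])
  have hbn : Summable fun k : ℕ => ‖b (k+1) s * x ^ (k+1)‖ :=
    ((summable_aux hx0 hx1 (fun k => b (k+1) s) hb1 1).abs).congr
      (fun k => by rw [Real.norm_eq_abs])
  rw [tsum_mul_tsum_eq_tsum_sum_range_of_summable_norm hcn hbn]
  refine tsum_congr fun n => ?_
  rw [Finset.sum_mul]
  refine Finset.sum_congr rfl fun j hj => ?_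
  have hjn : j ≤ n := Nat.lt_succ_iff.mp (Finset.mem_range.mp hj)
  have hpow : x ^ (j+1) * x ^ (n-j+1) = x ^ (n+2) := by
    rw [← pow_add]; congr 1; omega
  calc c (j+1) s * x ^ (j+1) * (b (n-j+1) s * x ^ (n-j+1))
      = c (j+1) s * b (n-j+1) s * (x ^ (j+1) * x ^ (n-j+1)) := by ring
    _ = c (j+1) s * b (n-j+1) s * x ^ (n+2) := by rw [hpow]

lemma swap_step (μ : Measure ℝ) [IsProbabilityMeasure μ] (t : ℝ)
    (H : ℕ → ℝ → ℝ) (Hm : ∀ n, Measurable (H n))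
    (Hnn : ∀ n s, 0 ≤ s → 0 ≤ H n s) (Hle : ∀ n s, 0 ≤ s → H n s ≤ 1)
    {x : ℝ} (hx0 : 0 < x) (hx1 : x < 1) :
    ∫ τ in Set.Icc 0 t, (∑' n : ℕ, H n (t - τ) * x ^ (n+2)) ∂μ =
      ∑' n : ℕ, (∫ τ in Set.Icc 0 t, H n (t - τ) ∂μ) * x ^ (n+2) := by
  have hmeas : ∀ n : ℕ, Measurable fun τ : ℝ => H n (t - τ) * x ^ (n+2) :=
    fun n => ((Hm n).comp (measurable_const.sub measurable_id)).mul_const _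
  have hbd : ∀ n : ℕ,
      (∫⁻ τ in Set.Icc 0 t, ‖H n (t - τ) * x ^ (n+2)‖₊ ∂μ) ≤ ENNReal.ofReal (x ^ (n+2)) := by
    intro n
    have hae : ∀ᵐ τ ∂μ.restrict (Set.Icc 0 t),
        (‖H n (t - τ) * x ^ (n+2)‖₊ : ℝ≥0∞) ≤ ENNReal.ofReal (x ^ (n+2)) := by
      refine (ae_restrict_mem measurableSet_Icc).mono fun τ hτ => ?_
      have hs : 0 ≤ t - τ := by linarith [hτ.2]
      have h1 : 0 ≤ H n (t - τ) * x ^ (n+2) :=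
        mul_nonneg (Hnn n _ hs) (by positivity)
      rw [← enorm_eq_nnnorm, ← ofReal_norm, Real.norm_eq_abs, abs_of_nonneg h1]
      exact ENNReal.ofReal_le_ofReal
        (mul_le_of_le_one_left (by positivity) (Hle n _ hs))
    calc ∫⁻ τ in Set.Icc 0 t, ‖H n (t - τ) * x ^ (n+2)‖₊ ∂μ
        ≤ ∫⁻ _ in Set.Icc 0 t, ENNReal.ofReal (x ^ (n+2)) ∂μ := lintegral_mono_ae hae
      _ = ENNReal.ofReal (x ^ (n+2)) * (μ.restrict (Set.Icc 0 t)) Set.univ := lintegral_const _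
      _ ≤ ENNReal.ofReal (x ^ (n+2)) * 1 := by
          gcongr
          rw [Measure.restrict_apply_univ]
          exact prob_le_one
      _ = ENNReal.ofReal (x ^ (n+2)) := mul_one _
  have hsum : Summable fun n : ℕ => x ^ (n+2) :=
    ((summable_aux hx0 hx1 (fun _ => 1) (fun _ => by simp) 2)).congr fun n => by rw [one_mul]
  have htop : (∑' n : ℕ, ∫⁻ τ in Set.Icc 0 t, ‖H n (t - τ) * x ^ (n+2)‖₊ ∂μ) ≠ ⊤ := by
    refine ne_top_of_le_ne_top ?_ (ENNReal.tsum_le_tsum hbd)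
    rw [← ENNReal.ofReal_tsum_of_nonneg (fun n => by positivity) hsum]
    exact ENNReal.ofReal_ne_top
  rw [integral_tsum (fun n => (hmeas n).aestronglyMeasurable) htop]
  exact tsum_congr fun n => integral_mul_const _ _

lemma coeff_unique (α β : ℕ → ℝ) (ha : ∀ k, |α k| ≤ 1) (hbb : ∀ k, |β k| ≤ 1)
    (h : ∀ x ∈ Set.Ioo (0:ℝ) 1, ∑' k : ℕ, α k * x ^ (k+1) = ∑' k : ℕ, β k * x ^ (k+1)) :
    ∀ k, α k = β k := by
  have hz : ∀ k, α k - β k = 0 := by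
    refine coeff_zero (fun k => α k - β k) (fun k => ?_) (fun x hx => ?_)
    · calc |α k - β k| ≤ |α k| + |β k| := abs_sub _ _
        _ ≤ 2 := by linarith [ha k, hbb k]
    · obtain ⟨hx0, hx1⟩ := hx
      have hsa : Summable fun k : ℕ => α k * x ^ (k + 0) := summable_aux hx0 hx1 α ha 0
      have hsb : Summable fun k : ℕ => β k * x ^ (k + 0) := summable_aux hx0 hx1 β hbb 0
      simp only [Nat.add_zero] at hsa hsb
      have heq : (∑' k : ℕ, α k * x ^ k) * x = (∑' k : ℕ, β k * x ^ k) * x := by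
        rw [← tsum_mul_right, ← tsum_mul_right]
        calc (∑' k : ℕ, α k * x ^ k * x) = ∑' k : ℕ, α k * x ^ (k+1) :=
              tsum_congr fun k => by rw [pow_succ]; ring
          _ = ∑' k : ℕ, β k * x ^ (k+1) := h x ⟨hx0, hx1⟩
          _ = ∑' k : ℕ, β k * x ^ k * x := tsum_congr fun k => by rw [pow_succ]; ring
      have heq2 : (∑' k : ℕ, α k * x ^ k) = ∑' k : ℕ, β k * x ^ k :=
        mul_right_cancel₀ hx0.ne' heq
      calc ∑' k : ℕ, (α k - β k) * x ^ k
          = ∑' k : ℕ, (α k * x ^ k - β k * x ^ k) := tsum_congr fun k => by ring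
        _ = (∑' k : ℕ, α k * x ^ k) - ∑' k : ℕ, β k * x ^ k := Summable.tsum_sub hsa hsb
        _ = 0 := by rw [heq2, sub_self]
  exact fun k => sub_eq_zero.mp (hz k)

def Hcb (c b : ℕ → ℝ → ℝ) (n : ℕ) (s : ℝ) : ℝ :=
  ∑ j ∈ Finset.range (n+1), c (j+1) s * b (n-j+1) s

/-- Suppose `c_k, b_k : [0,∞) → [0,∞)` are measurable with
`Σ_{k≥1} c_k(t) ≤ 1` and `Σ_{k≥1} b_k(t) ≤ 1`, and the generating functions
`f(t,x) = Σ_{k≥1} c_k(t) x^k`, `g(t,x) = Σ_{k≥1} b_k(t) x^k` satisfy, for all `t ≥ 0` and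
`x ∈ (0,1)`,
`f(t,x) = x P((t,∞)) + ∫_{[0,t]} f(t-τ,x) g(t-τ,x) dP(τ)` and
`g(t,x) = x Q((t,∞)) + ∫_{[0,t]} f(t-τ,x) g(t-τ,x) dQ(τ)`.
Then `c_1(t) = P((t,∞))`, `b_1(t) = Q((t,∞))`, and for `k ≥ 2`,
`c_k(t) = ∫_{[0,t]} Σ_{j=1}^{k-1} c_j(t-τ) b_{k-j}(t-τ) dP(τ)` and
`b_k(t) = ∫_{[0,t]} Σ_{j=1}^{k-1} c_j(t-τ) b_{k-j}(t-τ) dQ(τ)`. -/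
theorem stmt10
    (P Q : Measure ℝ) [IsProbabilityMeasure P] [IsProbabilityMeasure Q]
    (hP : P (Set.Iic 0) = 0) (hQ : Q (Set.Iic 0) = 0)
    (c b : ℕ → ℝ → ℝ)
    (hcm : ∀ k, Measurable (c k)) (hbm : ∀ k, Measurable (b k))
    (hcnn : ∀ k t, 0 ≤ c k t) (hbnn : ∀ k t, 0 ≤ b k t)
    (hcsum : ∀ t ≥ (0:ℝ), ∀ N : ℕ, ∑ k ∈ Finset.range N, c (k + 1) t ≤ 1)
    (hbsum : ∀ t ≥ (0:ℝ), ∀ N : ℕ, ∑ k ∈ Finset.range N, b (k + 1) t ≤ 1)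
    (f g : ℝ → ℝ → ℝ)
    (hf : ∀ t x : ℝ, f t x = ∑' k : ℕ, c (k + 1) t * x ^ (k + 1))
    (hg : ∀ t x : ℝ, g t x = ∑' k : ℕ, b (k + 1) t * x ^ (k + 1))
    (heqf : ∀ t ≥ (0:ℝ), ∀ x ∈ Set.Ioo (0:ℝ) 1,
      f t x = x * (P (Set.Ioi t)).toReal +
        ∫ τ in Set.Icc 0 t, f (t - τ) x * g (t - τ) x ∂P)
    (heqg : ∀ t ≥ (0:ℝ), ∀ x ∈ Set.Ioo (0:ℝ) 1,
      g t x = x * (Q (Set.Ioi t)).toReal +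
        ∫ τ in Set.Icc 0 t, f (t - τ) x * g (t - τ) x ∂Q) :
    ∀ t ≥ (0:ℝ),
      c 1 t = (P (Set.Ioi t)).toReal ∧
      b 1 t = (Q (Set.Ioi t)).toReal ∧
      (∀ k : ℕ, 2 ≤ k →
        c k t = ∫ τ in Set.Icc 0 t,
          (∑ j ∈ Finset.Ico 1 k, c j (t - τ) * b (k - j) (t - τ)) ∂P ∧
        b k t = ∫ τ in Set.Icc 0 t,
          (∑ j ∈ Finset.Ico 1 k, c j (t - τ) * b (k - j) (t - τ)) ∂Q) := by
  intro t ht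
  -- basic coefficient bounds
  have hc1 : ∀ s : ℝ, 0 ≤ s → ∀ k : ℕ, |c (k+1) s| ≤ 1 := by
    intro s hs k
    rw [abs_of_nonneg (hcnn _ _)]
    exact le_trans (Finset.single_le_sum (f := fun j => c (j+1) s)
      (fun j _ => hcnn _ _) (Finset.self_mem_range_succ k)) (hcsum s hs (k+1))
  have hb1 : ∀ s : ℝ, 0 ≤ s → ∀ k : ℕ, |b (k+1) s| ≤ 1 := by
    intro s hs k
    rw [abs_of_nonneg (hbnn _ _)]
    exact le_trans (Finset.single_le_sum (f := fun j => b (j+1) s)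
      (fun j _ => hbnn _ _) (Finset.self_mem_range_succ k)) (hbsum s hs (k+1))
  -- properties of Hcb
  have Hm : ∀ n, Measurable (Hcb c b n) := fun n =>
    Finset.measurable_sum _ (fun j _ => (hcm _).mul (hbm _))
  have Hnn : ∀ n (s : ℝ), 0 ≤ s → 0 ≤ Hcb c b n s := fun n s _ =>
    Finset.sum_nonneg fun j _ => mul_nonneg (hcnn _ _) (hbnn _ _)
  have Hle : ∀ n (s : ℝ), 0 ≤ s → Hcb c b n s ≤ 1 := by
    intro n s hs
    calc Hcb c b n s ≤ ∑ j ∈ Finset.range (n+1), c (j+1) s :=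
          Finset.sum_le_sum fun j _ =>
            mul_le_of_le_one_right (hcnn _ _) (by simpa using (abs_le.mp (hb1 s hs (n-j))).2)
      _ ≤ 1 := hcsum s hs (n+1)
  -- key: the integral as a power series
  have key : ∀ (μ : Measure ℝ), IsProbabilityMeasure μ → ∀ x ∈ Set.Ioo (0:ℝ) 1,
      ∫ τ in Set.Icc 0 t, f (t - τ) x * g (t - τ) x ∂μ =
        ∑' n : ℕ, (∫ τ in Set.Icc 0 t, Hcb c b n (t - τ) ∂μ) * x ^ (n+2) := by
    intro μ hμ x hx
    haveI := hμ
    obtain ⟨hx0, hx1⟩ := hx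
    rw [← swap_step μ t (Hcb c b) Hm Hnn Hle hx0 hx1]
    refine setIntegral_congr_fun measurableSet_Icc fun τ hτ => ?_
    have hs : 0 ≤ t - τ := by linarith [hτ.2]
    rw [hf, hg, cauchy_step c b (t-τ) (hc1 _ hs) (hb1 _ hs) hx0 hx1]
    rfl
  -- bound for the integrals
  have hIbd : ∀ (μ : Measure ℝ), IsProbabilityMeasure μ → ∀ n : ℕ,
      |∫ τ in Set.Icc 0 t, Hcb c b n (t - τ) ∂μ| ≤ 1 := by
    intro μ hμ n
    haveI := hμ
    have hae : ∀ᵐ τ ∂μ.restrict (Set.Icc 0 t), ‖Hcb c b n (t - τ)‖ ≤ 1 := by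
      refine (ae_restrict_mem measurableSet_Icc).mono fun τ hτ => ?_
      have hs : 0 ≤ t - τ := by linarith [hτ.2]
      rw [Real.norm_eq_abs, abs_of_nonneg (Hnn n _ hs)]
      exact Hle n _ hs
    calc |∫ τ in Set.Icc 0 t, Hcb c b n (t - τ) ∂μ|
        ≤ 1 * ((μ.restrict (Set.Icc 0 t)) Set.univ).toReal :=
          norm_integral_le_of_norm_le_const hae
      _ ≤ 1 := by
          rw [one_mul, Measure.restrict_apply_univ]
          exact ENNReal.toReal_mono (by norm_num) prob_le_one |>.trans (by norm_num)
  -- main uniqueness argument, per measure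
  have main : ∀ (μ : Measure ℝ), IsProbabilityMeasure μ → ∀ (d : ℕ → ℝ),
      (∀ k, |d k| ≤ 1) →
      (∀ x ∈ Set.Ioo (0:ℝ) 1, (∑' k : ℕ, d k * x ^ (k+1)) =
        x * (μ (Set.Ioi t)).toReal +
          ∑' n : ℕ, (∫ τ in Set.Icc 0 t, Hcb c b n (t - τ) ∂μ) * x ^ (n+2)) →
      d 0 = (μ (Set.Ioi t)).toReal ∧
        ∀ n : ℕ, d (n+1) = ∫ τ in Set.Icc 0 t, Hcb c b n (t - τ) ∂μ := by
    intro μ hμ d hd heq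
    haveI := hμ
    set ρ : ℕ → ℝ := fun k => match k with
      | 0 => (μ (Set.Ioi t)).toReal
      | n+1 => ∫ τ in Set.Icc 0 t, Hcb c b n (t - τ) ∂μ with hρdef
    have hρ : ∀ k, |ρ k| ≤ 1 := by
      intro k
      match k with
      | 0 =>
        rw [abs_of_nonneg ENNReal.toReal_nonneg]
        exact ENNReal.toReal_mono (by norm_num) prob_le_one |>.trans (by norm_num)
      | n+1 => exact hIbd μ hμ n
    have hcoeff : ∀ x ∈ Set.Ioo (0:ℝ) 1,
        ∑' k : ℕ, d k * x ^ (k+1) = ∑' k : ℕ, ρ k * x ^ (k+1) := by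
      intro x hx
      obtain ⟨hx0, hx1⟩ := hx
      have hsρ : Summable fun k : ℕ => ρ k * x ^ (k+1) := summable_aux hx0 hx1 ρ hρ 1
      rw [heq x ⟨hx0, hx1⟩, Summable.tsum_eq_zero_add hsρ]
      have h0 : ρ 0 * x ^ (0+1) = x * (μ (Set.Ioi t)).toReal := by
        simp [hρdef, mul_comm]
      rw [h0]
    have hdρ := coeff_unique d ρ hd hρ hcoeff
    exact ⟨hdρ 0, fun n => hdρ (n+1)⟩
  -- apply to c / P
  have hcmain := main P ‹_› (fun k => c (k+1) t) (hc1 t ht) (by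
    intro x hx
    rw [← hf t x, heqf t ht x hx, key P ‹_› x hx])
  have hbmain := main Q ‹_› (fun k => b (k+1) t) (hb1 t ht) (by
    intro x hx
    rw [← hg t x, heqg t ht x hx, key Q ‹_› x hx])
  -- rewrite Hcb as the Ico sum
  have hHrw : ∀ (m : ℕ) (s : ℝ),
      Hcb c b m s = ∑ j ∈ Finset.Ico 1 (m+2), c j s * b (m+2-j) s := by
    intro m s
    rw [Finset.sum_Ico_eq_sum_range]
    have h2 : m + 2 - 1 = m + 1 := by omega
    rw [h2]
    refine (Finset.sum_congr rfl fun j hj => ?_).symm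
    have hjm : j ≤ m := Nat.lt_succ_iff.mp (Finset.mem_range.mp hj)
    have e1 : 1 + j = j + 1 := by omega
    have e2 : m + 2 - (1 + j) = m - j + 1 := by omega
    rw [e2, e1]
  refine ⟨hcmain.1, hbmain.1, fun k hk => ?_⟩
  obtain ⟨m, rfl⟩ : ∃ m, k = m + 2 := ⟨k - 2, by omega⟩
  constructor
  · have := hcmain.2 m
    rw [show m + 1 + 1 = m + 2 from rfl] at this
    rw [this]
    exact setIntegral_congr_fun measurableSet_Icc fun τ _ => hHrw m (t - τ)
  · have := hbmain.2 m
    rw [show m + 1 + 1 = m + 2 from rfl] at this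
    rw [this]
    exact setIntegral_congr_fun measurableSet_Icc fun τ _ => hHrw m (t - τ)
end

section
/- Fix x ∈ ℂ with |x| < 1. The function f(t) = x e^{-t}/(1 - x + x e^{-t}) is well defined for all t ≥ 0 (its denominator never vanishes), satisfies f(0) = x and the differential equation f'(t) = f(t)² - f(t) for all t ≥ 0, and also satisfies the integral equation f(t) = x e^{-t} + ∫₀^t f(t-τ)² e^{-τ} dτ for all t ≥ 0. -/
open MeasureTheory Set Filter intervalIntegral

/-- Fix `x ∈ ℂ` with `|x| < 1`. The function
`f(t) = x e^{-t}/(1 - x + x e^{-t})` is well defined for all `t ≥ 0` (its denominator never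
vanishes), satisfies `f(0) = x` and the differential equation `f'(t) = f(t)² - f(t)` for all
`t ≥ 0`, and also satisfies the integral equation
`f(t) = x e^{-t} + ∫₀^t f(t-τ)² e^{-τ} dτ` for all `t ≥ 0`. -/
theorem stmt12
    (x : ℂ) (hx : ‖x‖ < 1)
    (f : ℝ → ℂ)
    (hf : ∀ t : ℝ, f t = x * Complex.exp (-(t : ℂ)) / (1 - x + x * Complex.exp (-(t : ℂ)))) :
    (∀ t ≥ (0:ℝ), 1 - x + x * Complex.exp (-(t : ℂ)) ≠ 0) ∧
    f 0 = x ∧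
    (∀ t ≥ (0:ℝ), HasDerivAt f (f t ^ 2 - f t) t) ∧
    (∀ t ≥ (0:ℝ), f t = x * Complex.exp (-(t : ℂ)) +
      ∫ τ in (0:ℝ)..t, f (t - τ) ^ 2 * Complex.exp (-(τ : ℂ))) := by
  have hden : ∀ t ≥ (0:ℝ), 1 - x + x * Complex.exp (-(t : ℂ)) ≠ 0 := by
    intro t ht h
    have he : Complex.exp (-(t:ℂ)) = ((Real.exp (-t) : ℝ) : ℂ) := by
      rw [Complex.ofReal_exp]; norm_cast
    have hx1 : x * (1 - Complex.exp (-(t:ℂ))) = 1 := by linear_combination -h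
    have habs := congrArg norm hx1
    rw [norm_mul, norm_one] at habs
    have hexp1 : Real.exp (-t) ≤ 1 := by
      calc Real.exp (-t) ≤ Real.exp 0 := Real.exp_le_exp.mpr (by linarith)
        _ = 1 := Real.exp_zero
    have h2 : ‖1 - Complex.exp (-(t:ℂ))‖ = 1 - Real.exp (-t) := by
      rw [he, ← Complex.ofReal_one, ← Complex.ofReal_sub, Complex.norm_real, Real.norm_eq_abs,
        abs_of_nonneg (by linarith)]
    rw [h2] at habs
    have hpos := Real.exp_pos (-t)
    have hxnn := norm_nonneg x
    nlinarith
  have hf0 : f 0 = x := by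
    rw [hf 0]; simp
  have hexp : ∀ t : ℝ, HasDerivAt (fun s : ℝ => Complex.exp (-(s:ℂ)))
      (-Complex.exp (-(t:ℂ))) t := by
    intro t
    have h1 : HasDerivAt (fun z : ℂ => Complex.exp (-z)) (-Complex.exp (-(t:ℂ))) (t:ℂ) := by
      have := (Complex.hasDerivAt_exp (-(t:ℂ))).comp (t:ℂ) (hasDerivAt_neg (t:ℂ))
      simpa [mul_comm, Function.comp_def] using this
    exact h1.comp_ofReal
  have hderiv : ∀ t : ℝ, (1 - x + x * Complex.exp (-(t:ℂ))) ≠ 0 →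
      HasDerivAt f (f t ^ 2 - f t) t := by
    intro t h0
    have hu : HasDerivAt (fun s : ℝ => x * Complex.exp (-(s:ℂ)))
        (x * -Complex.exp (-(t:ℂ))) t := (hexp t).const_mul x
    have hv : HasDerivAt (fun s : ℝ => 1 - x + x * Complex.exp (-(s:ℂ)))
        (0 + x * -Complex.exp (-(t:ℂ))) t :=
      (hasDerivAt_const t (1 - x)).add ((hexp t).const_mul x)
    have hd := hu.div hv h0
    have hfun : f = fun s : ℝ => x * Complex.exp (-(s:ℂ)) / (1 - x + x * Complex.exp (-(s:ℂ))) :=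
      funext hf
    rw [hfun]
    refine hd.congr_deriv ?_
    field_simp
    ring
  have hDE : ∀ t ≥ (0:ℝ), HasDerivAt f (f t ^ 2 - f t) t := fun t ht => hderiv t (hden t ht)
  refine ⟨hden, hf0, hDE, ?_⟩
  intro t ht
  have hF : ∀ s ∈ Set.uIcc (0:ℝ) t,
      HasDerivAt (fun s : ℝ => Complex.exp (s:ℂ) * f s)
        (Complex.exp (s:ℂ) * f s ^ 2) s := by
    intro s hs
    rw [Set.uIcc_of_le ht] at hs
    have hE : HasDerivAt (fun s : ℝ => Complex.exp (s:ℂ)) (Complex.exp (s:ℂ)) s :=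
      (Complex.hasDerivAt_exp (s:ℂ)).comp_ofReal
    have := hE.mul (hderiv s (hden s hs.1))
    refine this.congr_deriv ?_
    ring
  have hcont : ContinuousOn (fun s : ℝ => Complex.exp (s:ℂ) * f s ^ 2) (Set.uIcc 0 t) := by
    intro s hs
    rw [Set.uIcc_of_le ht] at hs
    exact ((Complex.continuous_exp.comp Complex.continuous_ofReal).continuousAt.mul
      ((hderiv s (hden s hs.1)).differentiableAt.continuousAt.pow 2)).continuousWithinAt
  have key := intervalIntegral.integral_eq_sub_of_hasDerivAt hF hcont.intervalIntegrable
  simp only [Complex.ofReal_zero, Complex.exp_zero, one_mul, hf0] at key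
  have hchg := intervalIntegral.integral_comp_sub_left
    (a := 0) (b := t) (fun s : ℝ => f s ^ 2 * Complex.exp (-((t - s : ℝ):ℂ))) t
  simp only [sub_sub_cancel, sub_zero, sub_self] at hchg
  have heq : (fun s : ℝ => f s ^ 2 * Complex.exp (-((t - s : ℝ):ℂ))) =
      fun s : ℝ => Complex.exp (-(t:ℂ)) * (Complex.exp (s:ℂ) * f s ^ 2) := by
    funext s
    rw [show (-((t - s:ℝ):ℂ)) = -(t:ℂ) + (s:ℂ) by push_cast; ring, Complex.exp_add]
    ring
  rw [heq] at hchg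
  rw [intervalIntegral.integral_const_mul, key] at hchg
  rw [hchg]
  have h1 : Complex.exp (-(t:ℂ)) * Complex.exp (t:ℂ) = 1 := by
    rw [← Complex.exp_add]; simp
  linear_combination -f t * h1
end

section
/- (Lea–Coulson distribution.) For every m > 0 and every x ∈ (0,1): exp( -m + m ∫₀^∞ (x e^{-t}/(1 - x + x e^{-t})) e^{-t} dt ) = (1-x)^{m(1-x)/x}. Equivalently, ∫₀^∞ x e^{-2t}/(1 - x + x e^{-t}) dt = 1 + ((1-x)/x)·log(1-x). -/
open MeasureTheory Set Filter Topology

lemma key_integral (x : ℝ) (hx0 : 0 < x) (hx1 : x < 1) :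
    (∫ t in Set.Ioi (0:ℝ), x * Real.exp (-(2 * t)) / (1 - x + x * Real.exp (-t))) =
      1 + ((1 - x) / x) * Real.log (1 - x) := by
  set a : ℝ := (1 - x) / x with ha
  have hxne : x ≠ 0 := hx0.ne'
  have ha0 : 0 < a := div_pos (by linarith) hx0
  set F : ℝ → ℝ := fun t => -Real.exp (-t) + a * Real.log (a + Real.exp (-t)) with hF
  have hden : ∀ t : ℝ, 0 < a + Real.exp (-t) := fun t => by positivity
  have hderiv : ∀ t : ℝ, HasDerivAt F (x * Real.exp (-(2*t)) / (1 - x + x * Real.exp (-t))) t := by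
    intro t
    have h1 : HasDerivAt (fun t : ℝ => Real.exp (-t)) (-Real.exp (-t)) t := by
      simpa using ((hasDerivAt_neg t).exp)
    have h2 : HasDerivAt (fun t : ℝ => a + Real.exp (-t)) (-Real.exp (-t)) t := by
      simpa using h1
    have h3 : HasDerivAt (fun t : ℝ => Real.log (a + Real.exp (-t)))
        (-Real.exp (-t) / (a + Real.exp (-t))) t := h2.log (hden t).ne'
    have h4 : HasDerivAt (fun y => -Real.exp (-y) + a * Real.log (a + Real.exp (-y))) _ t :=
      (h1.neg).add ((h3.const_mul a))
    convert h4 using 1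
    have hd2 : (0:ℝ) < 1 - x + x * Real.exp (-t) := by
      have := Real.exp_pos (-t); nlinarith
    have hexp2 : Real.exp (-(2*t)) = Real.exp (-t) * Real.exp (-t) := by
      rw [← Real.exp_add]; ring_nf
    have hrel : 1 - x + x * Real.exp (-t) = x * (a + Real.exp (-t)) := by
      rw [ha]; field_simp
    rw [hexp2, hrel]
    rw [show x * (Real.exp (-t) * Real.exp (-t)) / (x * (a + Real.exp (-t)))
        = Real.exp (-t) * Real.exp (-t) / (a + Real.exp (-t)) from
      mul_div_mul_left _ _ hxne]
    field_simp
    ring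
  have hnonneg : ∀ t ∈ Set.Ioi (0:ℝ), 0 ≤ x * Real.exp (-(2*t)) / (1 - x + x * Real.exp (-t)) := by
    intro t _
    have hd2 : (0:ℝ) < 1 - x + x * Real.exp (-t) := by
      have := Real.exp_pos (-t); nlinarith
    positivity
  have htend : Tendsto F atTop (𝓝 (a * Real.log a)) := by
    have he : Tendsto (fun t : ℝ => Real.exp (-t)) atTop (𝓝 0) := by
      exact Real.tendsto_exp_neg_atTop_nhds_zero
    have hlog : Tendsto (fun t : ℝ => Real.log (a + Real.exp (-t))) atTop (𝓝 (Real.log a)) := by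
      have : Tendsto (fun t : ℝ => a + Real.exp (-t)) atTop (𝓝 (a + 0)) :=
        tendsto_const_nhds.add he
      rw [add_zero] at this
      exact (Real.continuousAt_log ha0.ne').tendsto.comp this
    have := (he.neg).add (hlog.const_mul a)
    simpa using this
  have hint := integral_Ioi_of_hasDerivAt_of_nonneg
    (hderiv 0).continuousAt.continuousWithinAt (fun t _ => hderiv t) hnonneg htend
  rw [hint]
  have hF0 : F 0 = -1 + a * Real.log (a + 1) := by simp [hF]
  rw [hF0]
  have hfrac : a / (a + 1) = 1 - x := by
    have : a + 1 = 1 / x := by rw [ha, div_add_one hxne, sub_add_cancel]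
    rw [this, ha]; field_simp
  have : Real.log a - Real.log (a + 1) = Real.log (1 - x) := by
    rw [← Real.log_div ha0.ne' (by positivity), hfrac]
  nlinarith [this]

/-- **Lea–Coulson distribution.** For every `m > 0` and every `x ∈ (0,1)`:
`exp(-m + m ∫₀^∞ (x e^{-t}/(1 - x + x e^{-t})) e^{-t} dt) = (1-x)^{m(1-x)/x}`;
equivalently, `∫₀^∞ x e^{-2t}/(1 - x + x e^{-t}) dt = 1 + ((1-x)/x) log(1-x)`. -/
theorem stmt13 :
    ∀ m : ℝ, 0 < m → ∀ x ∈ Set.Ioo (0:ℝ) 1,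
      Real.exp (-m + m * ∫ t in Set.Ioi (0:ℝ),
          (x * Real.exp (-t) / (1 - x + x * Real.exp (-t))) * Real.exp (-t)) =
        (1 - x) ^ (m * (1 - x) / x) ∧
      (∫ t in Set.Ioi (0:ℝ), x * Real.exp (-(2 * t)) / (1 - x + x * Real.exp (-t))) =
        1 + ((1 - x) / x) * Real.log (1 - x) := by
  intro m hm x hx
  obtain ⟨hx0, hx1⟩ := hx
  have hkey := key_integral x hx0 hx1
  have heq : ∀ t : ℝ, (x * Real.exp (-t) / (1 - x + x * Real.exp (-t))) * Real.exp (-t)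
      = x * Real.exp (-(2 * t)) / (1 - x + x * Real.exp (-t)) := by
    intro t
    rw [div_mul_eq_mul_div, mul_assoc, ← Real.exp_add]
    ring_nf
  refine ⟨?_, hkey⟩
  simp_rw [heq, hkey]
  rw [Real.rpow_def_of_pos (by linarith)]
  congr 1
  field_simp
  ring
end
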